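/- arXiv:2010.08878 — 6 statements merged into one kernel-verified Lean document; each statement's English description precedes it below -/
import Mathlib

section
/- Let H be a class of finite simple graphs, closed under graph isomorphism, satisfying the following two conditions: (i) for every graph G in H and every vertex x of G, the induced subgraph G \ N_G[x] belongs to H; (ii) every graph G in H having no isolated vertex admits a minimal vertex cover of cardinality at least |V(G)|/2. Then for every graph G in H and every integer k ≥ 1, deg(J(G)^{(k)}) = k · deg(J(G)). -/
open MvPolynomial

/-- `C` is a vertex cover of `G`: every edge is incident to a vertex of `C`. -/
def IsVertexCover {V : Type*} (G : SimpleGraph V) (C : Set V) : Prop :=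
  ∀ ⦃a b : V⦄, G.Adj a b → a ∈ C ∨ b ∈ C

/-- `C` is a minimal vertex cover of `G`. -/
def IsMinVertexCover {V : Type*} (G : SimpleGraph V) (C : Set V) : Prop :=
  IsVertexCover G C ∧ ∀ D : Set V, D ⊂ C → ¬ IsVertexCover G D

/-- `A` is an independent set of `G`. -/
def IsIndepSet {V : Type*} (G : SimpleGraph V) (A : Set V) : Prop :=
  ∀ ⦃a⦄, a ∈ A → ∀ ⦃b⦄, b ∈ A → ¬ G.Adj a b

/-- `A` is a maximal independent set of `G`. -/
def IsMaxIndepSet {V : Type*} (G : SimpleGraph V) (A : Set V) : Prop :=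
  IsIndepSet G A ∧ ∀ B : Set V, IsIndepSet G B → A ⊆ B → A = B

/-- A graph is unmixed if all maximal independent sets have the same cardinality. -/
def Unmixed {V : Type*} (G : SimpleGraph V) : Prop :=
  ∀ A B : Set V, IsMaxIndepSet G A → IsMaxIndepSet G B → A.ncard = B.ncard

/-- `G` has no isolated vertices. -/
def HasNoIsolatedVertex {V : Type*} (G : SimpleGraph V) : Prop :=
  ∀ v : V, ∃ w : V, G.Adj v w

/-- `G` is very well-covered: no isolated vertices, an even number of vertices, and every
maximal independent set has cardinality half the number of vertices. -/
def VeryWellCovered {V : Type*} [Fintype V] (G : SimpleGraph V) : Prop :=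
  HasNoIsolatedVertex G ∧ Even (Fintype.card V) ∧
    ∀ A : Set V, IsMaxIndepSet G A → 2 * A.ncard = Fintype.card V

/-- `G` is claw-free: it has no induced subgraph isomorphic to `K_{1,3}`. -/
def ClawFree {V : Type*} (G : SimpleGraph V) : Prop :=
  ¬ ∃ a b c d : V, G.Adj a b ∧ G.Adj a c ∧ G.Adj a d ∧
      ¬ G.Adj b c ∧ ¬ G.Adj b d ∧ ¬ G.Adj c d ∧ b ≠ c ∧ b ≠ d ∧ c ≠ d

/-- The graph obtained from `G` by deleting the vertices in `A`: it has the same vertex set,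
and its edges are the edges of `G` avoiding `A` (so the vertices of `A` become isolated). -/
def deleteVerts {V : Type*} (G : SimpleGraph V) (A : Set V) : SimpleGraph V where
  Adj a b := G.Adj a b ∧ a ∉ A ∧ b ∉ A
  symm := ⟨fun a b ⟨h1, h2, h3⟩ => ⟨h1.symm, h3, h2⟩⟩
  loopless := ⟨fun a h => G.loopless.irrefl a h.1⟩

/-- The closed neighborhood `N_G[F]` of a set of vertices `F`. -/
def closedNbhdSet {V : Type*} (G : SimpleGraph V) (F : Set V) : Set V :=
  ⋃ a ∈ F, insert a (G.neighborSet a)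

/-- The cover ideal `J(G)` of the graph `G`:
the intersection of the ideals `(x_i, x_j)` over the edges `{x_i, x_j}` of `G`. -/
noncomputable def coverIdeal (K : Type*) [Field K] {V : Type*} (G : SimpleGraph V) :
    Ideal (MvPolynomial V K) :=
  ⨅ (p : V × V) (_ : G.Adj p.1 p.2), Ideal.span {X p.1, X p.2}

/-- The `k`-th symbolic power `J(G)^{(k)}` of the cover ideal of `G`:
the intersection of the ideals `(x_i, x_j)^k` over the edges `{x_i, x_j}` of `G`
(the empty intersection being the unit ideal). -/
noncomputable def symbPow (K : Type*) [Field K] {V : Type*} (G : SimpleGraph V) (k : ℕ) :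
    Ideal (MvPolynomial V K) :=
  ⨅ (p : V × V) (_ : G.Adj p.1 p.2), Ideal.span {X p.1, X p.2} ^ k

/-- The degree of a monomial with exponent vector `m`. -/
def mdeg {V : Type*} (m : V →₀ ℕ) : ℕ := m.sum fun _ e => e

/-- The monomial with exponent vector `m` is a minimal monomial generator of `I`. -/
def IsMinGen {K : Type*} [Field K] {V : Type*} (I : Ideal (MvPolynomial V K)) (m : V →₀ ℕ) :
    Prop :=
  (monomial m (1 : K)) ∈ I ∧
    ∀ i : V, m i ≠ 0 → (monomial (m - Finsupp.single i 1) (1 : K)) ∉ I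

/-- `deg I`: the maximum degree of a minimal monomial generator of `I`. -/
noncomputable def genDeg {K : Type*} [Field K] {V : Type*} (I : Ideal (MvPolynomial V K)) : ℕ :=
  sSup {d : ℕ | ∃ m : V →₀ ℕ, IsMinGen I m ∧ mdeg m = d}

lemma finsupp_prod_ite {K : Type*} [Field K] {V : Type*} [DecidableEq V] (a b : V) (hab : a ≠ b)
    (m : V →₀ ℕ) :
    (m.prod fun v e => (if v = a ∨ v = b then (Polynomial.X : Polynomial K) else 1) ^ e)
      = Polynomial.X ^ (m a + m b) := by
  have h1 : ∀ v ∈ m.support, (if v = a ∨ v = b then (Polynomial.X : Polynomial K) else 1) ^ m v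
      = Polynomial.X ^ (if v = a ∨ v = b then m v else 0) := by
    intro v _; split <;> simp
  rw [Finsupp.prod, Finset.prod_congr rfl h1, Finset.prod_pow_eq_pow_sum]
  congr 1
  have h2 : ∀ v ∈ m.support, (if v = a ∨ v = b then m v else 0)
      = (if v = a then m v else 0) + (if v = b then m v else 0) := by
    intro v _
    by_cases hva : v = a
    · subst hva; simp [hab]
    · by_cases hvb : v = b <;> simp [hva, hvb, hab.symm]
  rw [Finset.sum_congr rfl h2, Finset.sum_add_distrib,
    Finset.sum_ite_eq' m.support a m, Finset.sum_ite_eq' m.support b m]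
  by_cases ha : a ∈ m.support <;> by_cases hb : b ∈ m.support <;>
    simp_all [Finsupp.notMem_support_iff]

lemma mem_pow_span_pair {K : Type*} [Field K] {V : Type*} [DecidableEq V] {a b : V} (hab : a ≠ b)
    (k : ℕ) (m : V →₀ ℕ) :
    (monomial m (1:K)) ∈ (Ideal.span {X a, X b} : Ideal (MvPolynomial V K)) ^ k
      ↔ k ≤ m a + m b := by
  constructor
  · intro h
    set f : V → Polynomial K := fun v => if v = a ∨ v = b then Polynomial.X else 1 with hf
    set φ := (aeval f : MvPolynomial V K →ₐ[K] Polynomial K) with hφ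
    have hmem : φ (monomial m 1) ∈ Ideal.map φ.toRingHom ((Ideal.span {X a, X b} : Ideal (MvPolynomial V K)) ^ k) :=
      Ideal.mem_map_of_mem _ h
    rw [Ideal.map_pow, Ideal.map_span] at hmem
    have hXa : φ (X a) = Polynomial.X := by rw [hφ, aeval_X, hf]; simp
    have hXb : φ (X b) = Polynomial.X := by rw [hφ, aeval_X, hf]; simp
    have himg : (φ.toRingHom '' {X a, X b} : Set (Polynomial K)) = {Polynomial.X} := by
      rw [Set.image_insert_eq, Set.image_singleton]
      simp only [AlgHom.toRingHom_eq_coe, RingHom.coe_coe]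
      rw [hXa, hXb, Set.pair_eq_singleton]
    rw [himg, Ideal.span_singleton_pow, Ideal.mem_span_singleton] at hmem
    have hφm : φ (monomial m 1) = Polynomial.X ^ (m a + m b) := by
      rw [hφ, aeval_monomial, map_one, one_mul, hf]
      exact finsupp_prod_ite a b hab m
    rw [hφm, Polynomial.X_pow_dvd_iff] at hmem
    by_contra hlt
    push_neg at hlt
    have := hmem (m a + m b) hlt
    simp [Polynomial.coeff_X_pow] at this
  · intro h
    set i := min k (m a) with hi
    set j := k - i with hj
    have hik : i ≤ m a := min_le_right _ _
    have hjk : j ≤ m b := by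
      rcases le_or_gt k (m a) with h' | h'
      · have : i = k := min_eq_left h'; omega
      · have : i = m a := min_eq_right h'.le; omega
    have hij : i + j = k := by
      have : i ≤ k := min_le_left _ _
      omega
    set s : V →₀ ℕ := Finsupp.single a i + Finsupp.single b j with hs
    have hsm : s ≤ m := by
      rw [Finsupp.le_def]
      intro v
      rw [hs]
      simp only [Finsupp.add_apply, Finsupp.single_apply]
      split_ifs with h1 h2 h2
      · exact absurd (h1.trans h2.symm) hab
      · subst h1; omega
      · subst h2; omega
      · omega
    have key : monomial (m - s) (1:K) * (X a ^ i * X b ^ j) = monomial m 1 := by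
      rw [X_pow_eq_monomial, X_pow_eq_monomial, ← mul_assoc, monomial_mul, monomial_mul,
        one_mul, one_mul, add_assoc, ← hs, tsub_add_cancel_of_le hsm]
    rw [← key]
    apply Ideal.mul_mem_left
    have hXa : (X a : MvPolynomial V K) ∈ Ideal.span {X a, X b} :=
      Ideal.subset_span (Set.mem_insert _ _)
    have hXb : (X b : MvPolynomial V K) ∈ Ideal.span {X a, X b} :=
      Ideal.subset_span (Set.mem_insert_of_mem _ rfl)
    have := Ideal.mul_mem_mul (Ideal.pow_mem_pow hXa i) (Ideal.pow_mem_pow hXb j)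
    rwa [← pow_add, hij] at this

def MGV {V : Type*} (G : SimpleGraph V) (k : ℕ) (m : V → ℕ) : Prop :=
  (∀ a b : V, G.Adj a b → k ≤ m a + m b) ∧
    (∀ i : V, m i ≠ 0 → ∃ a b : V, G.Adj a b ∧ (i = a ∨ i = b) ∧ m a + m b = k)

lemma mem_symbPow {K : Type*} [Field K] {V : Type*} (G : SimpleGraph V) (k : ℕ) (m : V →₀ ℕ) :
    (monomial m (1:K)) ∈ symbPow K G k ↔ ∀ a b : V, G.Adj a b → k ≤ m a + m b := by
  classical
  rw [symbPow]
  simp only [Ideal.mem_iInf]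
  constructor
  · intro h a b hab
    exact (mem_pow_span_pair hab.ne k m).mp (h (a, b) hab)
  · intro h p hp
    exact (mem_pow_span_pair hp.ne k m).mpr (h p.1 p.2 hp)

lemma isMinGen_symbPow_iff {K : Type*} [Field K] {V : Type*} (G : SimpleGraph V) (k : ℕ)
    (m : V →₀ ℕ) : IsMinGen (symbPow K G k) m ↔ MGV G k ⇑m := by
  classical
  constructor
  · rintro ⟨hmem, hmin⟩
    have ha := (mem_symbPow G k m).mp hmem
    refine ⟨ha, fun i hi => ?_⟩
    have h2 := hmin i hi
    rw [mem_symbPow] at h2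
    push_neg at h2
    obtain ⟨a, b, hab, hlt⟩ := h2
    rw [Finsupp.tsub_apply, Finsupp.tsub_apply] at hlt
    have hne : a ≠ b := hab.ne
    have hia : i = a ∨ i = b := by
      by_contra hcon
      push_neg at hcon
      rw [Finsupp.single_eq_of_ne' hcon.1, Finsupp.single_eq_of_ne' hcon.2] at hlt
      have := ha a b hab
      omega
    refine ⟨a, b, hab, hia, ?_⟩
    have hk := ha a b hab
    rcases hia with rfl | rfl
    · rw [Finsupp.single_eq_same, Finsupp.single_eq_of_ne' hne] at hlt
      omega
    · rw [Finsupp.single_eq_same, Finsupp.single_eq_of_ne' (Ne.symm hne)] at hlt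
      omega
  · rintro ⟨ha, hmin⟩
    refine ⟨(mem_symbPow G k m).mpr ha, fun i hi => ?_⟩
    obtain ⟨a, b, hab, hia, hsum⟩ := hmin i hi
    rw [mem_symbPow]
    push_neg
    refine ⟨a, b, hab, ?_⟩
    rw [Finsupp.tsub_apply, Finsupp.tsub_apply]
    have hne : a ≠ b := hab.ne
    rcases hia with rfl | rfl
    · rw [Finsupp.single_eq_same, Finsupp.single_eq_of_ne' hne]
      omega
    · rw [Finsupp.single_eq_same, Finsupp.single_eq_of_ne' (Ne.symm hne)]
      omega

lemma mem_closedNbhdSet {V : Type*} (G : SimpleGraph V) (B : Set V) (v : V) :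
    v ∈ closedNbhdSet G B ↔ ∃ b ∈ B, v = b ∨ G.Adj b v := by
  simp [closedNbhdSet, SimpleGraph.mem_neighborSet]

lemma minVC_iff_local {V : Type*} (G : SimpleGraph V) (C : Set V) :
    IsMinVertexCover G C ↔ IsVertexCover G C ∧ ∀ v ∈ C, ∃ w, G.Adj v w ∧ w ∉ C := by
  constructor
  · rintro ⟨hc, hmin⟩
    refine ⟨hc, fun v hv => ?_⟩
    by_contra hcon
    push_neg at hcon
    refine hmin (C \ {v}) (Set.sdiff_singleton_ssubset.mpr hv) ?_
    intro a b hab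
    rcases hc hab with ha | hb
    · by_cases hav : a = v
      · subst hav
        right
        exact ⟨hcon b hab, fun h => G.loopless.irrefl a (h ▸ hab)⟩
      · exact Or.inl ⟨ha, hav⟩
    · by_cases hbv : b = v
      · subst hbv
        left
        exact ⟨hcon a hab.symm, fun h => G.loopless.irrefl b (h ▸ hab)⟩
      · exact Or.inr ⟨hb, hbv⟩
  · rintro ⟨hc, hloc⟩
    refine ⟨hc, fun D hD hDc => ?_⟩
    obtain ⟨v, hvC, hvD⟩ := Set.exists_of_ssubset hD
    obtain ⟨w, hvw, hwC⟩ := hloc v hvC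
    rcases hDc hvw with h | h
    · exact hvD h
    · exact hwC (hD.subset h)

noncomputable def covMax {V : Type*} (G : SimpleGraph V) : ℕ :=
  sSup {n | ∃ C : Set V, IsMinVertexCover G C ∧ C.ncard = n}

lemma exists_minVC {V : Type*} [Finite V] (G : SimpleGraph V) :
    ∃ C : Set V, IsMinVertexCover G C := by
  set S := {n | ∃ C : Set V, IsVertexCover G C ∧ C.ncard = n} with hS
  have hne : S.Nonempty := ⟨(Set.univ : Set V).ncard, Set.univ, fun a b _ => Or.inl trivial, rfl⟩
  obtain ⟨C, hC, hCcard⟩ := Nat.sInf_mem hne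
  refine ⟨C, hC, fun D hD hDc => ?_⟩
  have h1 : D.ncard < C.ncard := Set.ncard_lt_ncard hD (Set.toFinite C)
  have h2 : sInf S ≤ D.ncard := Nat.sInf_le ⟨D, hDc, rfl⟩
  omega

lemma minVC_card_le {V : Type*} [Finite V] {G : SimpleGraph V} {C : Set V}
    (h : IsMinVertexCover G C) : C.ncard ≤ Nat.card V := by
  rw [← Set.ncard_univ]
  exact Set.ncard_le_ncard (Set.subset_univ C) (Set.toFinite _)

lemma le_covMax {V : Type*} [Finite V] {G : SimpleGraph V} {C : Set V}
    (h : IsMinVertexCover G C) : C.ncard ≤ covMax G :=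
  le_csSup ⟨Nat.card V, fun _ ⟨_, hD, hcard⟩ => hcard ▸ minVC_card_le hD⟩ ⟨C, h, rfl⟩

lemma covMax_spec {V : Type*} [Finite V] (G : SimpleGraph V) :
    ∃ C : Set V, IsMinVertexCover G C ∧ C.ncard = covMax G := by
  obtain ⟨C, hC⟩ := exists_minVC G
  have h1 : C.ncard ∈ {n | ∃ D : Set V, IsMinVertexCover G D ∧ D.ncard = n} := ⟨C, hC, rfl⟩
  have h2 : BddAbove {n | ∃ D : Set V, IsMinVertexCover G D ∧ D.ncard = n} := by
    refine ⟨Nat.card V, fun n hn => ?_⟩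
    obtain ⟨D, hD, rfl⟩ := hn
    exact minVC_card_le hD
  exact Nat.sSup_mem ⟨_, h1⟩ h2

noncomputable def induceInduceIso {V : Type*} (G : SimpleGraph V) (T : Set V) (S : Set T) :
    ((G.induce T).induce S) ≃g (G.induce (Subtype.val '' S)) where
  toEquiv := Equiv.Set.image Subtype.val S Subtype.val_injective
  map_rel_iff' := by
    intro a b
    simp [Equiv.Set.image_apply]

lemma Hdel_set (H : ∀ (V : Type) [Finite V], SimpleGraph V → Prop)
    (Hiso : ∀ (V W : Type) [Finite V] [Finite W] (G : SimpleGraph V) (G' : SimpleGraph W),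
      Nonempty (G ≃g G') → H V G → H W G')
    (Hdel : ∀ (V : Type) [Finite V] (G : SimpleGraph V) (x : V), H V G →
      H ((insert x (G.neighborSet x))ᶜ : Set V) (G.induce ((insert x (G.neighborSet x))ᶜ))) :
    ∀ (n : ℕ) (V : Type) [Finite V] (G : SimpleGraph V), H V G → ∀ B : Set V,
      (∀ a ∈ B, ∀ b ∈ B, ¬ G.Adj a b) → B.ncard = n →
      H ((closedNbhdSet G B)ᶜ : Set V) (G.induce ((closedNbhdSet G B)ᶜ)) := by
  intro n
  induction n with
  | zero =>
    intro V _ G hG B hind hB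
    have hBe : B = ∅ := (Set.ncard_eq_zero (Set.toFinite B)).mp hB
    subst hBe
    have h0 : closedNbhdSet G (∅ : Set V) = ∅ := by
      ext v; simp [mem_closedNbhdSet]
    rw [h0, Set.compl_empty]
    exact Hiso V _ G _ ⟨(SimpleGraph.induceUnivIso G).symm⟩ hG
  | succ n ih =>
    intro V _ G hG B hind hB
    have hne : B.Nonempty := Set.nonempty_of_ncard_ne_zero (by omega)
    obtain ⟨x, hx⟩ := hne
    set T : Set V := (insert x (G.neighborSet x))ᶜ with hT
    have hG' : H T (G.induce T) := Hdel V G x hG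
    set B' : Set T := {b : T | ↑b ∈ B} with hB'
    have hBT : ∀ b ∈ B, b ≠ x → b ∈ T := by
      intro b hb hbx
      rw [hT]
      simp only [Set.mem_compl_iff, Set.mem_insert_iff, SimpleGraph.mem_neighborSet]
      push_neg
      exact ⟨hbx, hind x hx b hb⟩
    have himg : Subtype.val '' B' = B \ {x} := by
      ext v
      constructor
      · rintro ⟨w, hw, rfl⟩
        refine ⟨hw, ?_⟩
        intro hvx
        have hwmem : (↑w : V) ∉ insert x (G.neighborSet x) := w.2
        exact hwmem (Or.inl (by simpa using hvx))
      · rintro ⟨hvB, hvx⟩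
        exact ⟨⟨v, hBT v hvB (by simpa using hvx)⟩, hvB, rfl⟩
    have hcard : B'.ncard = n := by
      have h1 : B'.ncard = (Subtype.val '' B').ncard :=
        (Set.ncard_image_of_injective _ Subtype.val_injective).symm
      rw [h1, himg, Set.ncard_diff_singleton_of_mem hx, hB]
      omega
    have hind' : ∀ a ∈ B', ∀ b ∈ B', ¬ (G.induce T).Adj a b := by
      intro a ha b hb hab
      exact hind _ ha _ hb hab
    have hstep := ih T (G.induce T) hG' B' hind' hcard
    set S' : Set T := (closedNbhdSet (G.induce T) B')ᶜ with hS'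
    have hset : Subtype.val '' S' = (closedNbhdSet G B)ᶜ := by
      ext v
      constructor
      · rintro ⟨w, hwS', rfl⟩
        intro hmem
        rw [mem_closedNbhdSet] at hmem
        obtain ⟨b, hbB, hvb⟩ := hmem
        have hwT : (↑w : V) ∉ insert x (G.neighborSet x) := w.2
        simp only [Set.mem_insert_iff, SimpleGraph.mem_neighborSet] at hwT
        push_neg at hwT
        have hbx : b ≠ x := by
          rintro rfl
          rcases hvb with h | h
          · exact hwT.1 h
          · exact hwT.2 h
        have hbT : b ∈ T := hBT b hbB hbx
        apply hwS'
        rw [mem_closedNbhdSet]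
        refine ⟨⟨b, hbT⟩, hbB, ?_⟩
        rcases hvb with h | h
        · exact Or.inl (Subtype.ext h)
        · exact Or.inr (by simpa using h)
      · intro hv
        have hvT : v ∈ T := by
          rw [hT]
          simp only [Set.mem_compl_iff, Set.mem_insert_iff, SimpleGraph.mem_neighborSet]
          push_neg
          constructor
          · rintro rfl
            exact hv ((mem_closedNbhdSet G B v).mpr ⟨v, hx, Or.inl rfl⟩)
          · intro hadj
            exact hv ((mem_closedNbhdSet G B v).mpr ⟨x, hx, Or.inr hadj⟩)
        refine ⟨⟨v, hvT⟩, ?_, rfl⟩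
        intro hmem
        rw [mem_closedNbhdSet] at hmem
        obtain ⟨b', hb'B, h⟩ := hmem
        apply hv
        rw [mem_closedNbhdSet]
        refine ⟨↑b', hb'B, ?_⟩
        rcases h with h | h
        · exact Or.inl (congrArg Subtype.val h)
        · exact Or.inr (by simpa using h)
    refine Hiso _ _ _ _ ?_ hstep
    rw [← hset]
    exact ⟨induceInduceIso G T S'⟩

lemma key (H : ∀ (V : Type) [Finite V], SimpleGraph V → Prop)
    (Hiso : ∀ (V W : Type) [Finite V] [Finite W] (G : SimpleGraph V) (G' : SimpleGraph W),
      Nonempty (G ≃g G') → H V G → H W G')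
    (Hdel : ∀ (V : Type) [Finite V] (G : SimpleGraph V) (x : V), H V G →
      H ((insert x (G.neighborSet x))ᶜ : Set V) (G.induce ((insert x (G.neighborSet x))ᶜ)))
    (Hcover : ∀ (V : Type) [Finite V] (G : SimpleGraph V), H V G → HasNoIsolatedVertex G →
      ∃ C : Set V, IsMinVertexCover G C ∧ Nat.card V ≤ 2 * C.ncard) :
    ∀ (k : ℕ), 1 ≤ k → ∀ (V : Type) [Finite V] (G : SimpleGraph V), H V G →
      ∀ m : V → ℕ, MGV G k m → ∑ᶠ v, m v ≤ k * covMax G := by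
  intro k
  induction k using Nat.strong_induction_on with
  | _ k IH =>
  intro hk V _ G hG m hm
  haveI : Fintype V := Fintype.ofFinite V
  classical
  obtain ⟨hcov, hmin⟩ := hm
  set C1 : Set V := {x | m x ≠ 0 ∧ ∃ y, G.Adj x y ∧ m y = 0} with hC1
  set C2 : Set V := {x | m x ≠ 0 ∧ ∀ y, G.Adj x y → m y ≠ 0} with hC2
  have hsplitC : ∀ x, m x ≠ 0 → x ∈ C1 ∨ x ∈ C2 := by
    intro x hx
    by_cases h : ∃ y, G.Adj x y ∧ m y = 0
    · exact Or.inl ⟨hx, h⟩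
    · push_neg at h
      exact Or.inr ⟨hx, fun y hy => h y hy⟩
  have hC1C2 : ∀ x, x ∈ C1 → x ∈ C2 → False := by
    rintro x ⟨_, y, hxy, hy0⟩ ⟨_, hall⟩
    exact hall y hxy hy0
  have hub : ∀ x, m x ≠ 0 → m x ≤ k := by
    intro x hx
    obtain ⟨a, b, hab, hiab, hsum⟩ := hmin x hx
    rcases hiab with rfl | rfl <;> omega
  have hF1 : ∀ x ∈ C1, m x = k := by
    rintro x ⟨hx0, y, hxy, hy0⟩
    have h1 := hcov x y hxy
    have h2 := hub x hx0
    omega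
  have hF2 : ∀ x ∈ C2, ∃ y, G.Adj x y ∧ y ∈ C2 ∧ m x + m y = k := by
    rintro x ⟨hx0, hall⟩
    obtain ⟨a, b, hab, hiab, hsum⟩ := hmin x hx0
    have hmain : ∀ y, G.Adj x y → m x + m y = k → ∃ y', G.Adj x y' ∧ y' ∈ C2 ∧ m x + m y' = k := by
      intro y hxy hsumy
      have hy0 : m y ≠ 0 := hall y hxy
      have hyC2 : y ∈ C2 := by
        rcases hsplitC y hy0 with hyC1 | hyC2
        · have := hF1 y hyC1
          omega
        · exact hyC2
      exact ⟨y, hxy, hyC2, hsumy⟩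
    rcases hiab with rfl | rfl
    · exact hmain b hab hsum
    · exact hmain a hab.symm (by omega)
  have hC2lb : ∀ x ∈ C2, 1 ≤ m x := by
    rintro x ⟨hx0, _⟩
    omega
  have hC2ub : ∀ x ∈ C2, m x ≤ k - 1 := by
    intro x hx
    obtain ⟨y, _, hyC2, hsum⟩ := hF2 x hx
    have := hC2lb y hyC2
    omega
  set B : Set V := {x | m x = 0} with hB
  have hBind : ∀ a ∈ B, ∀ b ∈ B, ¬ G.Adj a b := by
    intro a ha b hb hab
    have := hcov a b hab
    have ha' : m a = 0 := ha
    have hb' : m b = 0 := hb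
    omega
  have hCompl : (closedNbhdSet G B)ᶜ = C2 := by
    ext v
    simp only [Set.mem_compl_iff, mem_closedNbhdSet, hC2, Set.mem_setOf_eq]
    constructor
    · intro h
      push_neg at h
      constructor
      · intro hv0
        exact (h v hv0).1 rfl
      · intro y hvy hy0
        exact (h y hy0).2 hvy.symm
    · rintro ⟨hv0, hall⟩
      rintro ⟨b, hb0, hvb⟩
      rcases hvb with rfl | hadj
      · exact hv0 hb0
      · exact hall b hadj.symm hb0
  have hG2 : H C2 (G.induce C2) := by
    have := Hdel_set H Hiso Hdel B.ncard V G hG B hBind rfl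
    rwa [hCompl] at this
  have hNoIso : HasNoIsolatedVertex (G.induce C2) := by
    intro v
    obtain ⟨y, hadj, hyC2, _⟩ := hF2 ↑v v.2
    exact ⟨⟨y, hyC2⟩, hadj⟩
  obtain ⟨D0, hD0, hD0card⟩ := Hcover C2 (G.induce C2) hG2 hNoIso
  have hC2card : C2.ncard ≤ 2 * covMax (G.induce C2) := by
    have h1 := le_covMax hD0
    have h2 : Nat.card C2 = C2.ncard := Nat.card_coe_set_eq C2
    omega
  obtain ⟨D, hD, hDcard⟩ := covMax_spec (G.induce C2)
  set Dv : Set V := Subtype.val '' D with hDv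
  have hDvC2 : Dv ⊆ C2 := by
    rintro v ⟨w, _, rfl⟩
    exact w.2
  have hdisj : Disjoint C1 Dv := by
    rw [Set.disjoint_left]
    intro v hvC1 hvDv
    exact hC1C2 v hvC1 (hDvC2 hvDv)
  have hcovD : IsVertexCover G (C1 ∪ Dv) := by
    intro a b hadj
    by_cases ha0 : m a = 0
    · have hb0 : m b ≠ 0 := by
        intro hb0
        have := hcov a b hadj
        omega
      exact Or.inr (Or.inl ⟨hb0, a, hadj.symm, ha0⟩)
    · by_cases ha1 : ∃ y, G.Adj a y ∧ m y = 0
      · exact Or.inl (Or.inl ⟨ha0, ha1⟩)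
      · push_neg at ha1
        have haC2 : a ∈ C2 := ⟨ha0, fun y hy => ha1 y hy⟩
        have hb0 : m b ≠ 0 := ha1 b hadj
        by_cases hb1 : ∃ y, G.Adj b y ∧ m y = 0
        · exact Or.inr (Or.inl ⟨hb0, hb1⟩)
        · push_neg at hb1
          have hbC2 : b ∈ C2 := ⟨hb0, fun y hy => hb1 y hy⟩
          have hadj2 : (G.induce C2).Adj ⟨a, haC2⟩ ⟨b, hbC2⟩ := hadj
          rcases hD.1 hadj2 with h | h
          · exact Or.inl (Or.inr ⟨_, h, rfl⟩)
          · exact Or.inr (Or.inr ⟨_, h, rfl⟩)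
  have hminD : IsMinVertexCover G (C1 ∪ Dv) := by
    rw [minVC_iff_local]
    refine ⟨hcovD, ?_⟩
    intro v hv
    rcases hv with hvC1 | hvDv
    · obtain ⟨hv0, y, hvy, hy0⟩ := hvC1
      refine ⟨y, hvy, ?_⟩
      rintro (hyC1 | hyDv)
      · exact hyC1.1 hy0
      · exact (hDvC2 hyDv).1 hy0
    · obtain ⟨d, hdD, rfl⟩ := hvDv
      obtain ⟨w, hadj2, hwD⟩ := ((minVC_iff_local (G.induce C2) D).mp hD).2 d hdD
      refine ⟨↑w, hadj2, ?_⟩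
      rintro (hwC1 | hwDv)
      · exact hC1C2 ↑w hwC1 w.2
      · obtain ⟨d', hd'D, heq⟩ := hwDv
        have : d' = w := Subtype.val_injective heq
        exact hwD (this ▸ hd'D)
  have hdG : C1.ncard + covMax (G.induce C2) ≤ covMax G := by
    have h1 := le_covMax hminD
    rw [Set.ncard_union_eq hdisj (Set.toFinite _) (Set.toFinite _)] at h1
    have h2 : Dv.ncard = D.ncard := Set.ncard_image_of_injective D Subtype.val_injective
    omega
  -- sum computations
  rw [finsum_eq_sum_of_fintype]
  have hsub : Finset.univ.filter (fun v => v ∈ C1) ∪ Finset.univ.filter (fun v => v ∈ C2)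
      ⊆ Finset.univ := Finset.subset_univ _
  have hsplit : ∑ v, m v = ∑ v ∈ C1.toFinset, m v + ∑ v ∈ C2.toFinset, m v := by
    rw [← Finset.sum_union]
    · refine (Finset.sum_subset (Finset.subset_univ _) ?_).symm
      intro v _ hv
      rw [Finset.mem_union, Set.mem_toFinset, Set.mem_toFinset] at hv
      push_neg at hv
      by_contra h0
      rcases hsplitC v h0 with h | h
      · exact hv.1 h
      · exact hv.2 h
    · rw [Finset.disjoint_left]
      intro v hv1 hv2
      rw [Set.mem_toFinset] at hv1 hv2
      exact hC1C2 v hv1 hv2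
  have hsum1 : ∑ v ∈ C1.toFinset, m v = k * C1.ncard := by
    rw [Finset.sum_congr rfl (fun v hv => hF1 v (Set.mem_toFinset.mp hv)),
      Finset.sum_const, smul_eq_mul, Set.ncard_eq_toFinset_card']
    ring
  have hsumC2eq : ∑ v ∈ C2.toFinset, m v = (∑ x : C2, (m ↑x - 1)) + C2.ncard := by
    rw [Finset.sum_subtype C2.toFinset (fun x => Set.mem_toFinset) m]
    have : ∀ x : C2, m ↑x = (m ↑x - 1) + 1 := by
      intro x
      have := hC2lb ↑x x.2
      omega
    rw [Finset.sum_congr rfl (fun x _ => this x), Finset.sum_add_distrib, Finset.sum_const,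
      smul_eq_mul, mul_one, Finset.card_univ, Set.ncard_eq_toFinset_card', Set.toFinset_card]
  have hsum2 : ∑ v ∈ C2.toFinset, m v ≤ k * covMax (G.induce C2) := by
    by_cases hk3 : 3 ≤ k
    · have hMGV2 : MGV (G.induce C2) (k - 2) (fun x => m ↑x - 1) := by
        constructor
        · intro a b hadj
          show k - 2 ≤ (m ↑a - 1) + (m ↑b - 1)
          have h1 := hcov ↑a ↑b hadj
          have h2 := hC2lb ↑a a.2
          have h3 := hC2lb ↑b b.2
          omega
        · intro i hi
          have hi' : m ↑i - 1 ≠ 0 := hi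
          obtain ⟨y, hadj, hyC2, hsum⟩ := hF2 ↑i i.2
          refine ⟨i, ⟨y, hyC2⟩, hadj, Or.inl rfl, ?_⟩
          show (m ↑i - 1) + (m y - 1) = k - 2
          have := hC2lb y hyC2
          have := hC2lb ↑i i.2
          omega
      have hIH := IH (k - 2) (by omega) (by omega) C2 (G.induce C2) hG2 _ hMGV2
      rw [finsum_eq_sum_of_fintype] at hIH
      have hmul : (k - 2) * covMax (G.induce C2) + 2 * covMax (G.induce C2)
          = k * covMax (G.induce C2) := by
        rw [← Nat.add_mul]
        congr 1
        omega
      omega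
    · -- k = 1 or k = 2 : m ↑x - 1 = 0 on C2
      have hz : ∀ x : C2, m ↑x - 1 = 0 := by
        intro x
        have h1 := hC2ub ↑x x.2
        omega
      rw [Finset.sum_congr rfl (fun x _ => hz x), Finset.sum_const] at hsumC2eq
      simp only [smul_eq_mul, mul_zero, zero_add] at hsumC2eq
      interval_cases k
      · -- k = 1 : C2 is empty
        have hC2e : C2 = ∅ := by
          by_contra hne
          obtain ⟨x, hx⟩ := Set.nonempty_iff_ne_empty.mpr hne
          have h1 := hC2lb x hx
          have h2 := hC2ub x hx
          omega
        rw [hsumC2eq, hC2e]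
        simp
      · rw [hsumC2eq]
        omega
  calc ∑ v, m v = ∑ v ∈ C1.toFinset, m v + ∑ v ∈ C2.toFinset, m v := hsplit
    _ ≤ k * C1.ncard + k * covMax (G.induce C2) := by omega
    _ = k * (C1.ncard + covMax (G.induce C2)) := by ring
    _ ≤ k * covMax G := Nat.mul_le_mul_left k hdG

lemma mdeg_eq_sum {V : Type*} [Fintype V] (m : V →₀ ℕ) : mdeg m = ∑ v, m v := by
  rw [mdeg, Finsupp.sum_fintype]
  intro; rfl

lemma genDeg_symbPow (K : Type) [Field K]
    (H : ∀ (V : Type) [Finite V], SimpleGraph V → Prop)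
    (Hiso : ∀ (V W : Type) [Finite V] [Finite W] (G : SimpleGraph V) (G' : SimpleGraph W),
      Nonempty (G ≃g G') → H V G → H W G')
    (Hdel : ∀ (V : Type) [Finite V] (G : SimpleGraph V) (x : V), H V G →
      H ((insert x (G.neighborSet x))ᶜ : Set V) (G.induce ((insert x (G.neighborSet x))ᶜ)))
    (Hcover : ∀ (V : Type) [Finite V] (G : SimpleGraph V), H V G → HasNoIsolatedVertex G →
      ∃ C : Set V, IsMinVertexCover G C ∧ Nat.card V ≤ 2 * C.ncard)
    (V : Type) [Finite V] (G : SimpleGraph V) (hG : H V G) (k : ℕ) (hk : 1 ≤ k) :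
    genDeg (symbPow K G k) = k * covMax G := by
  classical
  haveI : Fintype V := Fintype.ofFinite V
  have hub : ∀ d ∈ {d : ℕ | ∃ m : V →₀ ℕ, IsMinGen (symbPow K G k) m ∧ mdeg m = d},
      d ≤ k * covMax G := by
    rintro d ⟨m, hmg, rfl⟩
    have hMGV := (isMinGen_symbPow_iff G k m).mp hmg
    have hkey := key H Hiso Hdel Hcover k hk V G hG ⇑m hMGV
    rw [finsum_eq_sum_of_fintype] at hkey
    rw [mdeg_eq_sum]
    exact hkey
  have hmem : k * covMax G ∈
      {d : ℕ | ∃ m : V →₀ ℕ, IsMinGen (symbPow K G k) m ∧ mdeg m = d} := by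
    obtain ⟨C, hC, hCcard⟩ := covMax_spec G
    set f : V → ℕ := fun v => if v ∈ C then k else 0 with hf
    set m : V →₀ ℕ := Finsupp.equivFunOnFinite.symm f with hm
    have hcoe : ⇑m = f := rfl
    refine ⟨m, ?_, ?_⟩
    · rw [isMinGen_symbPow_iff, hcoe]
      constructor
      · intro a b hadj
        rcases hC.1 hadj with h | h <;> simp [hf, h] <;> omega
      · intro i hi
        have hiC : i ∈ C := by
          by_contra h
          rw [hf] at hi
          simp [h] at hi
        obtain ⟨w, hadj, hwC⟩ := ((minVC_iff_local G C).mp hC).2 i hiC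
        refine ⟨i, w, hadj, Or.inl rfl, ?_⟩
        simp [hf, hiC, hwC]
    · rw [mdeg_eq_sum, hcoe, hf, ← hCcard]
      rw [← Finset.sum_filter, Finset.sum_const, smul_eq_mul, mul_comm]
      congr 1
      rw [Set.ncard_eq_toFinset_card']
      congr 1
      ext v
      simp
  exact le_antisymm (csSup_le ⟨_, hmem⟩ hub) (le_csSup ⟨k * covMax G, hub⟩ hmem)

/-- Theorem `deg`: if `H` is a class of finite simple graphs closed under
isomorphism, closed under deletion of closed neighborhoods of vertices, and such that every
graph in `H` without isolated vertices admits a minimal vertex cover of cardinality at least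
half the number of vertices, then `deg (J(G)^{(k)}) = k * deg (J(G))` for every `G ∈ H` and
every `k ≥ 1`. -/
theorem statement0 (K : Type) [Field K]
    (H : ∀ (V : Type) [Finite V], SimpleGraph V → Prop)
    (Hiso : ∀ (V W : Type) [Finite V] [Finite W] (G : SimpleGraph V) (G' : SimpleGraph W),
      Nonempty (G ≃g G') → H V G → H W G')
    (Hdel : ∀ (V : Type) [Finite V] (G : SimpleGraph V) (x : V), H V G →
      H ((insert x (G.neighborSet x))ᶜ : Set V) (G.induce ((insert x (G.neighborSet x))ᶜ)))
    (Hcover : ∀ (V : Type) [Finite V] (G : SimpleGraph V), H V G → HasNoIsolatedVertex G →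
      ∃ C : Set V, IsMinVertexCover G C ∧ Nat.card V ≤ 2 * C.ncard)
    (V : Type) [Finite V] (G : SimpleGraph V) (hG : H V G) (k : ℕ) (hk : 1 ≤ k) :
    genDeg (symbPow K G k) = k * genDeg (coverIdeal K G) := by
  have h1 : coverIdeal K G = symbPow K G 1 := by
    simp [coverIdeal, symbPow, pow_one]
  rw [h1, genDeg_symbPow K H Hiso Hdel Hcover V G hG k hk,
    genDeg_symbPow K H Hiso Hdel Hcover V G hG 1 le_rfl, one_mul]
end

section
/- If G is an unmixed finite simple graph, then for every integer k ≥ 1, deg(J(G)^{(k)}) = k · deg(J(G)); in particular deg(J(G)^{(k)}) is a linear function of k. -/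
open MvPolynomial

section Aux
variable {K : Type*} [Field K] {V : Type*}


lemma monomial_mem_pair_pow [Fintype V] (a b : V) (hab : a ≠ b) (m : V →₀ ℕ) (k : ℕ) :
    (monomial m (1 : K)) ∈ (Ideal.span {X a, X b} : Ideal (MvPolynomial V K)) ^ k ↔
      k ≤ m a + m b := by
  classical
  constructor
  · intro hmem
    set Φ : MvPolynomial V K →ₐ[K] Polynomial K :=
      aeval (fun v => if v = a ∨ v = b then (Polynomial.X : Polynomial K) else 1) with hΦ
    have hXa : Φ (X a) = Polynomial.X := by simp [hΦ]
    have hXb : Φ (X b) = Polynomial.X := by simp [hΦ]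
    have hmap : (Ideal.span {X a, X b} : Ideal (MvPolynomial V K)).map (Φ : MvPolynomial V K →+* Polynomial K)
        = Ideal.span {Polynomial.X} := by
      rw [Ideal.map_span]
      congr 1
      rw [Set.image_pair]
      simp [hXa, hXb]
    have hm : Φ (monomial m 1) ∈ (Ideal.span {(Polynomial.X : Polynomial K)}) ^ k := by
      rw [← hmap, ← Ideal.map_pow]
      exact Ideal.mem_map_of_mem _ hmem
    have hval : Φ (monomial m 1) = Polynomial.X ^ (m a + m b) := by
      rw [hΦ, aeval_monomial, map_one, one_mul]
      rw [Finsupp.prod_fintype]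
      · have h1 : ∀ i : V, ((if i = a ∨ i = b then (Polynomial.X : Polynomial K) else 1) ^ m i)
            = (if i = a ∨ i = b then (Polynomial.X : Polynomial K) ^ m i else 1) := by
          intro i
          split_ifs <;> simp
        rw [Finset.prod_congr rfl (fun i _ => h1 i)]
        rw [← Finset.prod_subset (Finset.subset_univ ({a, b} : Finset V))
          (fun x _ hx => by
            rw [if_neg]
            simp only [Finset.mem_insert, Finset.mem_singleton] at hx
            tauto)]
        rw [Finset.prod_pair hab, if_pos (Or.inl rfl), if_pos (Or.inr rfl), pow_add]
      · intro i; simp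
    rw [hval, Ideal.span_singleton_pow, Ideal.mem_span_singleton] at hm
    by_contra hlt
    push_neg at hlt
    obtain ⟨q, hq⟩ := hm
    have hq0 : q ≠ 0 := by
      intro h
      rw [h, mul_zero] at hq
      exact pow_ne_zero _ Polynomial.X_ne_zero hq
    have := congrArg Polynomial.natDegree hq
    rw [Polynomial.natDegree_X_pow, Polynomial.natDegree_mul (pow_ne_zero _ Polynomial.X_ne_zero) hq0,
      Polynomial.natDegree_X_pow] at this
    omega
  · intro hk
    set I : Ideal (MvPolynomial V K) := Ideal.span {X a, X b} with hI
    have hXaI : (X a : MvPolynomial V K) ∈ I := Ideal.subset_span (by simp)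
    have hXbI : (X b : MvPolynomial V K) ∈ I := Ideal.subset_span (by simp)
    have hprod : (X a : MvPolynomial V K) ^ m a * X b ^ m b ∈ I ^ (m a + m b) := by
      rw [pow_add]
      exact Ideal.mul_mem_mul (Ideal.pow_mem_pow hXaI _) (Ideal.pow_mem_pow hXbI _)
    have hle : I ^ (m a + m b) ≤ I ^ k := Ideal.pow_le_pow_right hk
    have hsum : m - Finsupp.single a (m a) - Finsupp.single b (m b)
        + Finsupp.single a (m a) + Finsupp.single b (m b) = m := by
      ext i
      simp only [Finsupp.add_apply, Finsupp.tsub_apply, Finsupp.single_apply]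
      split_ifs <;> subst_vars <;> first | omega | exact absurd rfl hab
    have heq : (monomial m (1 : K))
        = monomial (m - Finsupp.single a (m a) - Finsupp.single b (m b)) (1 : K)
          * X a ^ m a * X b ^ m b := by
      rw [X_pow_eq_monomial, X_pow_eq_monomial, monomial_mul, monomial_mul, one_mul, one_mul,
        hsum]
    rw [heq, mul_assoc]
    exact Ideal.mul_mem_left _ _ (hle hprod)


/-- Membership of a monomial in the symbolic power. -/
lemma monomial_mem_symbPow [Fintype V] (G : SimpleGraph V) (k : ℕ) (m : V →₀ ℕ) :
    (monomial m (1 : K)) ∈ symbPow K G k ↔ ∀ a b : V, G.Adj a b → k ≤ m a + m b := by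
  rw [symbPow]
  simp only [Ideal.mem_iInf]
  constructor
  · intro h a b hab
    exact (monomial_mem_pair_pow a b hab.ne m k).mp (h (a, b) hab)
  · intro h p hp
    exact (monomial_mem_pair_pow p.1 p.2 hp.ne m k).mpr (h p.1 p.2 hp)

lemma coverIdeal_eq_symbPow_one [Fintype V] (G : SimpleGraph V) :
    coverIdeal K G = symbPow K G 1 := by
  rw [coverIdeal, symbPow]
  exact iInf_congr fun p => iInf_congr fun _ => (pow_one _).symm

/-- Characterization of minimal generators of the symbolic power. -/
lemma isMinGen_symbPow_iff_s1 [Fintype V] (G : SimpleGraph V) (k : ℕ) (m : V →₀ ℕ) :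
    IsMinGen (symbPow K G k) m ↔
      (∀ a b : V, G.Adj a b → k ≤ m a + m b) ∧
        (∀ i : V, m i ≠ 0 → ∃ j : V, G.Adj i j ∧ m i + m j ≤ k) := by
  classical
  rw [IsMinGen, monomial_mem_symbPow]
  constructor
  · rintro ⟨h1, h2⟩
    refine ⟨h1, fun i hi => ?_⟩
    have h3 := h2 i hi
    rw [monomial_mem_symbPow] at h3
    push_neg at h3
    obtain ⟨a, b, hab, hlt⟩ := h3
    have ha : ((m - Finsupp.single i 1 : V →₀ ℕ)) a = m a - (if i = a then 1 else 0) := by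
      simp [Finsupp.tsub_apply, Finsupp.single_apply]
    have hb : ((m - Finsupp.single i 1 : V →₀ ℕ)) b = m b - (if i = b then 1 else 0) := by
      simp [Finsupp.tsub_apply, Finsupp.single_apply]
    rw [ha, hb] at hlt
    have hsum := h1 a b hab
    by_cases hia : i = a
    · subst hia
      refine ⟨b, hab, ?_⟩
      have : i ≠ b := hab.ne
      rw [if_pos rfl, if_neg this] at hlt
      omega
    · have hib : i = b := by
        by_contra hib
        rw [if_neg hia, if_neg hib] at hlt
        omega
      subst hib
      refine ⟨a, hab.symm, ?_⟩
      have : i ≠ a := fun h => hia h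
      rw [if_neg this, if_pos rfl] at hlt
      omega
  · rintro ⟨h1, h2⟩
    refine ⟨h1, fun i hi hmem => ?_⟩
    rw [monomial_mem_symbPow] at hmem
    obtain ⟨j, hij, hle⟩ := h2 i hi
    have := hmem i j hij
    have hii : ((m - Finsupp.single i 1 : V →₀ ℕ)) i = m i - 1 := by
      simp [Finsupp.tsub_apply]
    have hjj : ((m - Finsupp.single i 1 : V →₀ ℕ)) j = m j := by
      rw [Finsupp.tsub_apply, Finsupp.single_apply, if_neg hij.ne]
      omega
    rw [hii, hjj] at this
    omega

end Aux


section Comb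
variable {V : Type*} [Fintype V]


/-- `B` is independent (within any ambient set). -/
def IndepOn (G : SimpleGraph V) (B : Set V) : Prop :=
  ∀ a ∈ B, ∀ b ∈ B, ¬ G.Adj a b

/-- `B` is a maximal independent subset of `A`. -/
def MaxIndepOn (G : SimpleGraph V) (A B : Set V) : Prop :=
  B ⊆ A ∧ IndepOn G B ∧ ∀ v ∈ A, v ∉ B → ∃ w ∈ B, G.Adj v w

lemma exists_maxIndepOn (G : SimpleGraph V) (A : Set V) (B : Set V) (hBA : B ⊆ A)
    (hBi : IndepOn G B) : ∃ M, MaxIndepOn G A M ∧ B ⊆ M := by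
  classical
  suffices h : ∀ n (B : Set V), (A \ B).ncard ≤ n → B ⊆ A → IndepOn G B →
      ∃ M, MaxIndepOn G A M ∧ B ⊆ M from h (A \ B).ncard B le_rfl hBA hBi
  intro n
  induction n with
  | zero =>
    intro B hn hBA hBi
    refine ⟨B, ⟨hBA, hBi, fun v hv hvB => absurd ?_ hvB⟩, subset_rfl⟩
    have : A \ B = ∅ := by
      rw [← Set.ncard_eq_zero (Set.toFinite _)]
      omega
    by_contra hvB'
    exact (Set.eq_empty_iff_forall_notMem.mp this v) ⟨hv, hvB'⟩
  | succ n ih =>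
    intro B hn hBA hBi
    by_cases hdom : ∀ v ∈ A, v ∉ B → ∃ w ∈ B, G.Adj v w
    · exact ⟨B, ⟨hBA, hBi, hdom⟩, subset_rfl⟩
    · push_neg at hdom
      obtain ⟨v, hvA, hvB, hvno⟩ := hdom
      have hBi' : IndepOn G (insert v B) := by
        intro a ha b hb hadj
        rcases ha with rfl | ha <;> rcases hb with rfl | hb
        · exact G.loopless.irrefl _ hadj
        · exact hvno b hb hadj
        · exact hvno a ha hadj.symm
        · exact hBi a ha b hb hadj
      have hlt : (A \ insert v B).ncard < (A \ B).ncard := by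
        apply Set.ncard_lt_ncard _ (Set.toFinite _)
        constructor
        · intro x hx
          exact ⟨hx.1, fun hxB => hx.2 (Set.mem_insert_of_mem _ hxB)⟩
        · intro hsub
          have := hsub ⟨hvA, hvB⟩
          exact this.2 (Set.mem_insert _ _)
      obtain ⟨M, hM, hM2⟩ := ih (insert v B) (by omega)
        (Set.insert_subset hvA hBA) hBi'
      exact ⟨M, hM, (Set.subset_insert _ _).trans hM2⟩

lemma two_mul_le_ncard (G : SimpleGraph V) :
    ∀ n (A : Set V) (β : ℕ), A.ncard ≤ n →
      (∀ B, MaxIndepOn G A B → B.ncard = β) →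
      (∀ v ∈ A, ∃ w ∈ A, G.Adj v w) → 2 * β ≤ A.ncard := by
  classical
  intro n
  induction n using Nat.strong_induction_on with
  | _ n ih =>
  intro A β hn h4 hiso
  rcases Set.eq_empty_or_nonempty A with rfl | hA
  · have hβ : β = 0 := by
      rw [← h4 ∅ ⟨subset_rfl, fun a ha => absurd ha (Set.notMem_empty a),
        fun v hv => absurd hv (Set.notMem_empty v)⟩]
      exact (Set.ncard_empty V).symm ▸ rfl
    simp [hβ]
  · -- pick u of minimal degree in A
    obtain ⟨u, huA, humin⟩ := Set.exists_min_image A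
      (fun v => ({w ∈ A | G.Adj v w}).ncard) (Set.toFinite A) hA
    set NB : Set V := {w ∈ A | G.Adj u w} with hNB
    set δ : ℕ := NB.ncard with hδ
    have hNBA : NB ⊆ A := fun w hw => hw.1
    have huNB : u ∉ NB := fun h => G.loopless.irrefl u h.2
    have hδ1 : 1 ≤ δ := by
      obtain ⟨w, hwA, hwadj⟩ := hiso u huA
      have : w ∈ NB := ⟨hwA, hwadj⟩
      have := Set.ncard_pos (Set.toFinite NB) |>.mpr ⟨w, this⟩
      omega
    set Z : Set V := {z ∈ A | z ∉ NB ∧ z ≠ u ∧ ∀ w ∈ A, G.Adj z w → w ∈ NB} with hZ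
    have hZA : Z ⊆ A := fun z hz => hz.1
    have huZ' : u ∉ Z := fun h => h.2.2.1 rfl
    have hZnbr : ∀ z ∈ Z, {w ∈ A | G.Adj z w} = NB := by
      intro z hz
      apply Set.eq_of_subset_of_ncard_le
      · intro w hw
        exact hz.2.2.2 w hw.1 hw.2
      · exact humin z hz.1
      · exact Set.toFinite _
    by_cases hcase : δ ≤ Z.ncard
    · -- contradiction case
      exfalso
      obtain ⟨b, hbNB⟩ : NB.Nonempty := Set.ncard_pos (Set.toFinite NB) |>.mp (by omega)
      obtain ⟨M₂, hM₂, hbM₂⟩ := exists_maxIndepOn G A {b} (by simp [hNBA hbNB])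
        (by intro a ha b' hb'; simp at ha hb'; subst ha; subst hb'; exact G.loopless.irrefl _)
      have hbM₂' : b ∈ M₂ := hbM₂ rfl
      set Astar : Set V := insert u Z with hAstar
      have hAstarA : Astar ⊆ A := Set.insert_subset huA hZA
      -- every element of Astar is adjacent to b, hence not in M₂
      have hadjb : ∀ x ∈ Astar, G.Adj x b := by
        intro x hx
        rcases hx with rfl | hx
        · exact hbNB.2
        · have := hZnbr x hx
          have hb' : b ∈ {w ∈ A | G.Adj x w} := this ▸ hbNB
          exact hb'.2
      have hAstarM₂ : ∀ x ∈ Astar, x ∉ M₂ := by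
        intro x hx hxM₂
        exact hM₂.2.1 x hxM₂ b hbM₂' (hadjb x hx)
      -- no edges from Astar to A \ NB
      have hAstarNbr : ∀ x ∈ Astar, ∀ y ∈ A, G.Adj x y → y ∈ NB := by
        intro x hx y hy hadj
        rcases hx with rfl | hx
        · exact ⟨hy, hadj⟩
        · exact hx.2.2.2 y hy hadj
      set M₂' : Set V := (M₂ \ NB) ∪ Astar with hM₂'
      have hM₂'A : M₂' ⊆ A := Set.union_subset (fun x hx => hM₂.1 hx.1) hAstarA
      have hM₂'i : IndepOn G M₂' := by
        intro x hx y hy hadj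
        rcases hx with hx | hx <;> rcases hy with hy | hy
        · exact hM₂.2.1 x hx.1 y hy.1 hadj
        · exact hx.2 (hAstarNbr y hy x (hM₂.1 hx.1) hadj.symm)
        · exact hy.2 (hAstarNbr x hx y (hM₂.1 hy.1) hadj)
        · -- both in Astar
          have hyNB : y ∈ NB := hAstarNbr x hx y (hAstarA hy) hadj
          rcases hy with rfl | hy
          · exact huNB hyNB
          · exact hy.2.1 hyNB
      obtain ⟨M₃, hM₃, hsub₃⟩ := exists_maxIndepOn G A M₂' hM₂'A hM₂'i
      have hβ₂ : M₂.ncard = β := h4 M₂ hM₂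
      have hβ₃ : M₃.ncard = β := h4 M₃ hM₃
      have hd1 : Disjoint (M₂ \ NB) Astar := by
        rw [Set.disjoint_right]
        intro x hx hx2
        exact hAstarM₂ x hx hx2.1
      have hcard_union : M₂'.ncard = (M₂ \ NB).ncard + Astar.ncard := by
        rw [hM₂']
        exact Set.ncard_union_eq hd1 (Set.toFinite _) (Set.toFinite _)
      have hdiff : (M₂ \ NB).ncard = M₂.ncard - (M₂ ∩ NB).ncard := by
        rw [← Set.diff_self_inter]
        exact Set.ncard_diff Set.inter_subset_left (Set.toFinite _)
      have hint : (M₂ ∩ NB).ncard ≤ δ :=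
        Set.ncard_le_ncard Set.inter_subset_right (Set.toFinite _)
      have hintM : (M₂ ∩ NB).ncard ≤ M₂.ncard :=
        Set.ncard_le_ncard Set.inter_subset_left (Set.toFinite _)
      have hAstarcard : Astar.ncard = Z.ncard + 1 := by
        rw [hAstar, Set.ncard_insert_of_notMem huZ' (Set.toFinite _)]
      have hle : M₂'.ncard ≤ M₃.ncard :=
        Set.ncard_le_ncard hsub₃ (Set.toFinite _)
      omega
    · -- recursive case
      push_neg at hcase
      set A'' : Set V := (A \ insert u NB) \ Z with hA''
      have hA''A : A'' ⊆ A := fun x hx => hx.1.1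
      have huA'' : u ∉ A'' := fun h => h.1.2 (Set.mem_insert _ _)
      -- the correspondence
      have hcorr : ∀ W, MaxIndepOn G A'' W → MaxIndepOn G A (insert u (W ∪ Z)) ∧
          (insert u (W ∪ Z)).ncard = W.ncard + Z.ncard + 1 := by
        intro W hW
        have hWA'' : W ⊆ A'' := hW.1
        have hWA : W ⊆ A := fun w hw => (hWA'' hw).1.1
        have hWnotNB : ∀ w ∈ W, w ∉ NB := fun w hw h => (hWA'' hw).1.2 (Set.mem_insert_of_mem _ h)
        have hWnotZ : ∀ w ∈ W, w ∉ Z := fun w hw => (hWA'' hw).2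
        have hWnotu : ∀ w ∈ W, w ≠ u := fun w hw h => huA'' (h ▸ hWA'' hw)
        have hZnotNB : ∀ z ∈ Z, z ∉ NB := fun z hz => hz.2.1
        have hind : IndepOn G (insert u (W ∪ Z)) := by
          intro x hx y hy hadj
          rcases hy with rfl | hy
          · rcases hx with rfl | hx
            · exact G.loopless.irrefl _ hadj
            · rcases hx with hx | hx
              · exact hWnotNB x hx ⟨hWA hx, hadj.symm⟩
              · exact hZnotNB x hx ⟨hZA hx, hadj.symm⟩
          · rcases hy with hy | hy
            · rcases hx with rfl | hx
              · exact hWnotNB y hy ⟨hWA hy, hadj⟩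
              · rcases hx with hx | hx
                · exact hW.2.1 x hx y hy hadj
                · exact hWnotNB y hy (hx.2.2.2 y (hWA hy) hadj)
            · rcases hx with rfl | hx
              · exact hZnotNB y hy ⟨hZA hy, hadj⟩
              · rcases hx with hx | hx
                · exact hWnotNB x hx (hy.2.2.2 x (hWA hx) hadj.symm)
                · exact hZnotNB y hy (hx.2.2.2 y (hZA hy) hadj)
        have hsubA : insert u (W ∪ Z) ⊆ A :=
          Set.insert_subset huA (Set.union_subset hWA hZA)
        have hdom : ∀ v ∈ A, v ∉ insert u (W ∪ Z) → ∃ w ∈ insert u (W ∪ Z), G.Adj v w := by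
          intro v hvA hv
          by_cases hvNB : v ∈ NB
          · exact ⟨u, Set.mem_insert _ _, hvNB.2.symm⟩
          · have hvu : v ≠ u := fun h => hv (h ▸ Set.mem_insert _ _)
            have hvZ : v ∉ Z := fun h => hv (Set.mem_insert_of_mem _ (Or.inr h))
            have hvA'' : v ∈ A'' := ⟨⟨hvA, fun h => by
              rcases h with h | h
              · exact hvu h
              · exact hvNB h⟩, hvZ⟩
            have hvW : v ∉ W := fun h => hv (Set.mem_insert_of_mem _ (Or.inl h))
            obtain ⟨w, hwW, hadj⟩ := hW.2.2 v hvA'' hvW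
            exact ⟨w, Set.mem_insert_of_mem _ (Or.inl hwW), hadj⟩
        refine ⟨⟨hsubA, hind, hdom⟩, ?_⟩
        have hd : Disjoint W Z := by
          rw [Set.disjoint_left]; exact fun w hw => hWnotZ w hw
        have hu : u ∉ W ∪ Z := by
          rintro (h | h)
          · exact hWnotu u h rfl
          · exact huZ' h
        rw [Set.ncard_insert_of_notMem hu (Set.toFinite _),
          Set.ncard_union_eq hd (Set.toFinite _) (Set.toFinite _)]
      -- no isolated vertices in A''
      have hiso'' : ∀ v ∈ A'', ∃ w ∈ A'', G.Adj v w := by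
        intro v hv
        have hvA : v ∈ A := hv.1.1
        have hvNB : v ∉ NB := fun h => hv.1.2 (Set.mem_insert_of_mem _ h)
        have hvu : v ≠ u := fun h => hv.1.2 (h ▸ Set.mem_insert _ _)
        have hvZ : v ∉ Z := hv.2
        have : ¬ (∀ w ∈ A, G.Adj v w → w ∈ NB) := by
          intro hall
          exact hvZ ⟨hvA, hvNB, hvu, hall⟩
        push_neg at this
        obtain ⟨w, hwA, hadj, hwNB⟩ := this
        have hwu : w ≠ u := by
          rintro rfl
          exact hvNB ⟨hvA, hadj.symm⟩
        have hwZ : w ∉ Z := by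
          intro hwZ
          exact hvNB (hwZ.2.2.2 v hvA hadj.symm)
        exact ⟨w, ⟨⟨hwA, fun h => by
          rcases h with h | h
          · exact hwu h
          · exact hwNB h⟩, hwZ⟩, hadj⟩
      -- get one maximal independent set on A''
      obtain ⟨W₀, hW₀, -⟩ := exists_maxIndepOn G A'' ∅ (Set.empty_subset _)
        (fun a ha => absurd ha (Set.notMem_empty a))
      have hW₀β : W₀.ncard + Z.ncard + 1 = β := by
        obtain ⟨hmax, hcard⟩ := hcorr W₀ hW₀
        rw [← h4 _ hmax, hcard]
      have h4'' : ∀ B, MaxIndepOn G A'' B → B.ncard = W₀.ncard := by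
        intro B hB
        obtain ⟨hmax, hcard⟩ := hcorr B hB
        have := h4 _ hmax
        omega
      have hA''lt : A''.ncard < A.ncard := by
        apply Set.ncard_lt_ncard _ (Set.toFinite _)
        exact ⟨hA''A, fun h => huA'' (h huA)⟩
      have hih := ih A''.ncard (by omega) A'' W₀.ncard le_rfl h4'' hiso''
      -- partition: A = A'' ∪ Z ∪ insert u NB
      have hpart : A.ncard = A''.ncard + Z.ncard + (insert u NB).ncard := by
        have h1 : A = (A \ insert u NB) ∪ insert u NB := by
          rw [Set.diff_union_self, Set.union_eq_self_of_subset_right]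
          exact Set.insert_subset huA hNBA
        have h2 : (A \ insert u NB) = A'' ∪ Z := by
          rw [hA'', Set.diff_union_self, Set.union_eq_self_of_subset_right]
          intro z hz
          exact ⟨hZA hz, fun h => by
            rcases h with h | h
            · exact hz.2.2.1 h
            · exact hz.2.1 h⟩
        have hd1 : Disjoint (A \ insert u NB) (insert u NB) := Set.disjoint_sdiff_left
        have hd2 : Disjoint A'' Z := by
          rw [Set.disjoint_left]; exact fun x hx => hx.2
        calc A.ncard = ((A \ insert u NB) ∪ insert u NB).ncard := by rw [← h1]
          _ = (A \ insert u NB).ncard + (insert u NB).ncard :=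
              Set.ncard_union_eq hd1 (Set.toFinite _) (Set.toFinite _)
          _ = (A'' ∪ Z).ncard + (insert u NB).ncard := by rw [h2]
          _ = A''.ncard + Z.ncard + (insert u NB).ncard := by
              rw [Set.ncard_union_eq hd2 (Set.toFinite _) (Set.toFinite _)]
      have hNBcard : (insert u NB).ncard = δ + 1 := by
        rw [Set.ncard_insert_of_notMem huNB (Set.toFinite _)]
      omega

lemma sum_ite_set (S : Set V) (f : V → ℕ) :
    (∑ i : V, S.indicator f i) = ∑ i ∈ S.toFinite.toFinset, f i := by
  classical
  have h1 : ∑ i ∈ S.toFinite.toFinset, S.indicator f i = ∑ i : V, S.indicator f i :=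
    Finset.sum_subset (Finset.subset_univ _)
      (fun x _ hx => Set.indicator_of_notMem (by simpa using hx) f)
  rw [← h1]
  exact Finset.sum_congr rfl (fun i hi => Set.indicator_of_mem (by simpa using hi) f)

lemma ncard_eq_card_toFinset (S : Set V) : S.ncard = S.toFinite.toFinset.card :=
  Set.ncard_eq_toFinset_card S S.toFinite

lemma mainComb (G : SimpleGraph V) :
    ∀ n (A : Set V) (k : ℕ) (m : V → ℕ) (β : ℕ), A.ncard + k ≤ n →
      (∀ i, i ∉ A → m i = 0) →
      (∀ a ∈ A, ∀ b ∈ A, G.Adj a b → k ≤ m a + m b) →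
      (∀ i ∈ A, m i ≠ 0 → ∃ j ∈ A, G.Adj i j ∧ m i + m j ≤ k) →
      (∀ B, MaxIndepOn G A B → B.ncard = β) →
      ∑ i : V, m i ≤ k * (A.ncard - β) := by
  classical
  intro n
  induction n using Nat.strong_induction_on with
  | _ n ih =>
  intro A k m β hn h0 h2 h3 h4
  -- case k = 0 : all values vanish
  rcases Nat.eq_zero_or_pos k with rfl | hk
  · have hz : ∀ i, m i = 0 := by
      intro i
      by_contra hi
      have hiA : i ∈ A := by
        by_contra hiA
        exact hi (h0 i hiA)
      obtain ⟨j, _, _, hle⟩ := h3 i hiA hi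
      omega
    simp [hz]
  set F : Set V := {i ∈ A | m i = 0} with hF
  by_cases hFne : F.Nonempty
  · -- delete the closed neighborhood of the zero set
    set NA : Set V := {w ∈ A | w ∉ F ∧ ∃ f ∈ F, G.Adj w f} with hNA
    set A' : Set V := A \ (F ∪ NA) with hA'
    have hA'A : A' ⊆ A := fun x hx => hx.1
    have hFA : F ⊆ A := fun x hx => hx.1
    have hNAA : NA ⊆ A := fun x hx => hx.1
    -- every vertex in NA has value exactly k
    have hNAval : ∀ j ∈ NA, m j = k := by
      intro j hj
      obtain ⟨f, hf, hadj⟩ := hj.2.2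
      have h1 : k ≤ m j := by
        have := h2 j hj.1 f hf.1 hadj
        rw [hf.2] at this
        omega
      have h2' : m j ≤ k := by
        obtain ⟨j2, _, _, hle⟩ := h3 j hj.1 (by omega)
        omega
      omega
    -- new exponent function
    set m' : V → ℕ := A'.indicator m with hm'
    have h0' : ∀ i, i ∉ A' → m' i = 0 := fun i hi => Set.indicator_of_notMem hi m
    have hm'eq : ∀ i ∈ A', m' i = m i := fun i hi => Set.indicator_of_mem hi m
    have hm'le : ∀ i, m i = m' i + NA.indicator (fun _ => k) i := by
      intro i
      by_cases hiA : i ∈ A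
      · by_cases hiF : i ∈ F
        · rw [h0' i (fun h : i ∈ A' => h.2 (Or.inl hiF)),
            Set.indicator_of_notMem (fun h : i ∈ NA => h.2.1 hiF), hiF.2]
          omega
        · by_cases hiNA : i ∈ NA
          · rw [h0' i (fun h : i ∈ A' => h.2 (Or.inr hiNA)),
              Set.indicator_of_mem hiNA, hNAval i hiNA]
            omega
          · rw [hm'eq i ⟨hiA, fun h => by
              rcases h with h | h
              · exact hiF h
              · exact hiNA h⟩, Set.indicator_of_notMem hiNA]
            omega
      · rw [h0 i hiA, h0' i (fun h : i ∈ A' => hiA h.1),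
          Set.indicator_of_notMem (fun h : i ∈ NA => hiA h.1)]
        omega
    have h2' : ∀ a ∈ A', ∀ b ∈ A', G.Adj a b → k ≤ m' a + m' b := by
      intro a ha b hb hadj
      rw [hm'eq a ha, hm'eq b hb]
      exact h2 a (hA'A ha) b (hA'A hb) hadj
    have h3' : ∀ i ∈ A', m' i ≠ 0 → ∃ j ∈ A', G.Adj i j ∧ m' i + m' j ≤ k := by
      intro i hi hmi
      rw [hm'eq i hi] at hmi
      obtain ⟨j, hjA, hadj, hle⟩ := h3 i (hA'A hi) hmi
      have hjF : j ∉ F := by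
        intro hjF
        have hiF : i ∉ F := fun h => hmi h.2
        exact hi.2 (Or.inr ⟨hA'A hi, hiF, ⟨j, hjF, hadj⟩⟩)
      have hjNA : j ∉ NA := by
        intro hjNA
        have := hNAval j hjNA
        omega
      have hjA' : j ∈ A' := ⟨hjA, fun h => by
        rcases h with h | h
        · exact hjF h
        · exact hjNA h⟩
      refine ⟨j, hjA', hadj, ?_⟩
      rw [hm'eq i hi, hm'eq j hjA']
      exact hle
    -- maximal independent sets on A' all have the same size
    have hcorr : ∀ W, MaxIndepOn G A' W → MaxIndepOn G A (W ∪ F) ∧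
        (W ∪ F).ncard = W.ncard + F.ncard := by
      intro W hW
      have hWA' : W ⊆ A' := hW.1
      have hWF : ∀ w ∈ W, w ∉ F := fun w hw h => (hWA' hw).2 (Or.inl h)
      have hWNA : ∀ w ∈ W, w ∉ NA := fun w hw h => (hWA' hw).2 (Or.inr h)
      have hFind : IndepOn G F := by
        intro a ha b hb hadj
        have := h2 a ha.1 b hb.1 hadj
        rw [ha.2, hb.2] at this
        omega
      have hind : IndepOn G (W ∪ F) := by
        intro x hx y hy hadj
        rcases hx with hx | hx <;> rcases hy with hy | hy
        · exact hW.2.1 x hx y hy hadj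
        · exact hWNA x hx ⟨hA'A (hWA' hx), hWF x hx, ⟨y, hy, hadj⟩⟩
        · exact hWNA y hy ⟨hA'A (hWA' hy), hWF y hy, ⟨x, hx, hadj.symm⟩⟩
        · exact hFind x hx y hy hadj
      have hsub : W ∪ F ⊆ A := Set.union_subset (fun w hw => hA'A (hWA' hw)) hFA
      have hdom : ∀ v ∈ A, v ∉ W ∪ F → ∃ w ∈ W ∪ F, G.Adj v w := by
        intro v hvA hv
        by_cases hvNA : v ∈ NA
        · obtain ⟨f, hf, hadj⟩ := hvNA.2.2
          exact ⟨f, Or.inr hf, hadj⟩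
        · have hvF : v ∉ F := fun h => hv (Or.inr h)
          have hvA' : v ∈ A' := ⟨hvA, fun h => by
            rcases h with h | h
            · exact hvF h
            · exact hvNA h⟩
          have hvW : v ∉ W := fun h => hv (Or.inl h)
          obtain ⟨w, hwW, hadj⟩ := hW.2.2 v hvA' hvW
          exact ⟨w, Or.inl hwW, hadj⟩
      refine ⟨⟨hsub, hind, hdom⟩, ?_⟩
      apply Set.ncard_union_eq _ (Set.toFinite _) (Set.toFinite _)
      rw [Set.disjoint_left]
      exact fun w hw => hWF w hw
    obtain ⟨W₀, hW₀, -⟩ := exists_maxIndepOn G A' ∅ (Set.empty_subset _)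
      (fun a ha => absurd ha (Set.notMem_empty a))
    have hW₀β : W₀.ncard + F.ncard = β := by
      obtain ⟨hmax, hcard⟩ := hcorr W₀ hW₀
      rw [← h4 _ hmax, hcard]
    have h4' : ∀ B, MaxIndepOn G A' B → B.ncard = W₀.ncard := by
      intro B hB
      obtain ⟨hmax, hcard⟩ := hcorr B hB
      have := h4 _ hmax
      omega
    -- cardinality bookkeeping
    have hpart : A.ncard = A'.ncard + F.ncard + NA.ncard := by
      have h1 : A = A' ∪ (F ∪ NA) := by
        rw [hA', Set.diff_union_self, Set.union_eq_self_of_subset_right]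
        exact Set.union_subset hFA hNAA
      have hd1 : Disjoint A' (F ∪ NA) := Set.disjoint_sdiff_left
      have hd2 : Disjoint F NA := by
        rw [Set.disjoint_left]
        exact fun x hx h => h.2.1 hx
      calc A.ncard = (A' ∪ (F ∪ NA)).ncard := by rw [← h1]
        _ = A'.ncard + (F ∪ NA).ncard :=
            Set.ncard_union_eq hd1 (Set.toFinite _) (Set.toFinite _)
        _ = A'.ncard + (F.ncard + NA.ncard) := by
            rw [Set.ncard_union_eq hd2 (Set.toFinite _) (Set.toFinite _)]
        _ = A'.ncard + F.ncard + NA.ncard := by ring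
    have hA'lt : A'.ncard < A.ncard := by
      apply Set.ncard_lt_ncard _ (Set.toFinite _)
      refine ⟨hA'A, fun hsub => ?_⟩
      obtain ⟨f, hf⟩ := hFne
      exact (hsub (hFA hf)).2 (Or.inl hf)
    have hih := ih (A'.ncard + k) (by omega) A' k m' W₀.ncard le_rfl h0' h2' h3' h4'
    have hW₀A' : W₀.ncard ≤ A'.ncard := by
      rw [h4' W₀ hW₀]
      exact Set.ncard_le_ncard hW₀.1 (Set.toFinite _)
    -- sum bookkeeping
    have hsum : ∑ i : V, m i = (∑ i : V, m' i) + k * NA.ncard := by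
      calc ∑ i : V, m i = ∑ i : V, (m' i + NA.indicator (fun _ => k) i) :=
            Finset.sum_congr rfl (fun i _ => hm'le i)
        _ = (∑ i : V, m' i) + ∑ i : V, NA.indicator (fun _ => k) i := Finset.sum_add_distrib
        _ = (∑ i : V, m' i) + ∑ i ∈ NA.toFinite.toFinset, k := by
            rw [sum_ite_set NA (fun _ => k)]
        _ = (∑ i : V, m' i) + k * NA.ncard := by
            rw [Finset.sum_const, ncard_eq_card_toFinset, smul_eq_mul, mul_comm]
    have hfinal : A.ncard - β = (A'.ncard - W₀.ncard) + NA.ncard := by omega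
    rw [hsum, hfinal, Nat.mul_add]
    omega
  · -- full support case
    rcases Set.eq_empty_or_nonempty A with rfl | hAne
    · have hz : ∀ i, m i = 0 := fun i => h0 i (Set.notMem_empty i)
      simp [hz]
    have hsupp : ∀ i ∈ A, m i ≠ 0 := by
      intro i hi h
      exact hFne ⟨i, hi, h⟩
    -- k ≥ 2
    obtain ⟨a₀, ha₀⟩ := hAne
    obtain ⟨j₀, hj₀A, _, hle₀⟩ := h3 a₀ ha₀ (hsupp a₀ ha₀)
    have hk2 : 2 ≤ k := by
      have h1 := hsupp a₀ ha₀
      have h2 := hsupp j₀ hj₀A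
      omega
    set m' : V → ℕ := A.indicator (fun j => m j - 1) with hm'
    have h0' : ∀ i, i ∉ A → m' i = 0 := fun i hi => Set.indicator_of_notMem hi _
    have hm'eq : ∀ i ∈ A, m' i = m i - 1 := fun i hi => Set.indicator_of_mem hi _
    have h2' : ∀ a ∈ A, ∀ b ∈ A, G.Adj a b → k - 2 ≤ m' a + m' b := by
      intro a ha b hb hadj
      have := h2 a ha b hb hadj
      have h1 := hsupp a ha
      have hb1 := hsupp b hb
      rw [hm'eq a ha, hm'eq b hb]
      omega
    have h3' : ∀ i ∈ A, m' i ≠ 0 → ∃ j ∈ A, G.Adj i j ∧ m' i + m' j ≤ k - 2 := by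
      intro i hi hmi
      obtain ⟨j, hjA, hadj, hle⟩ := h3 i hi (hsupp i hi)
      refine ⟨j, hjA, hadj, ?_⟩
      have := hsupp j hjA
      have := hsupp i hi
      rw [hm'eq i hi, hm'eq j hjA]
      omega
    have hih := ih (A.ncard + (k - 2)) (by omega) A (k - 2) m' β le_rfl h0' h2' h3' h4
    -- no isolated vertices, so 2 β ≤ |A|
    have hiso : ∀ v ∈ A, ∃ w ∈ A, G.Adj v w := by
      intro v hv
      obtain ⟨j, hjA, hadj, -⟩ := h3 v hv (hsupp v hv)
      exact ⟨j, hjA, hadj⟩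
    have h2β := two_mul_le_ncard G A.ncard A β le_rfl h4 hiso
    obtain ⟨B₀, hB₀, -⟩ := exists_maxIndepOn G A ∅ (Set.empty_subset _)
      (fun a ha => absurd ha (Set.notMem_empty a))
    have hβA : β ≤ A.ncard := by
      rw [← h4 B₀ hB₀]
      exact Set.ncard_le_ncard hB₀.1 (Set.toFinite _)
    -- sum bookkeeping
    have hsum : ∑ i : V, m i = (∑ i : V, m' i) + A.ncard := by
      calc ∑ i : V, m i = ∑ i : V, (m' i + A.indicator (fun _ => 1) i) := by
            apply Finset.sum_congr rfl
            intro i _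
            by_cases hiA : i ∈ A
            · rw [hm'eq i hiA, Set.indicator_of_mem hiA]
              have := hsupp i hiA
              omega
            · rw [h0 i hiA, h0' i hiA, Set.indicator_of_notMem hiA]
              omega
        _ = (∑ i : V, m' i) + ∑ i : V, A.indicator (fun _ => 1) i := Finset.sum_add_distrib
        _ = (∑ i : V, m' i) + A.ncard := by
            rw [sum_ite_set A (fun _ => 1), Finset.sum_const, ncard_eq_card_toFinset,
              smul_eq_mul, mul_one]
    rw [hsum]
    have hkey : (k - 2) * (A.ncard - β) + A.ncard ≤ k * (A.ncard - β) := by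
      have h1 : A.ncard ≤ 2 * (A.ncard - β) := by omega
      have : (k - 2) * (A.ncard - β) + 2 * (A.ncard - β) = k * (A.ncard - β) := by
        rw [← Nat.add_mul]
        congr 1
        omega
      omega
    omega


lemma maxIndepOn_univ_iff (G : SimpleGraph V) (B : Set V) :
    MaxIndepOn G Set.univ B ↔ IsMaxIndepSet G B := by
  constructor
  · rintro ⟨-, hi, hdom⟩
    refine ⟨fun a ha b hb => hi a ha b hb, fun C hC hBC => ?_⟩
    by_contra hne
    have : ∃ x, x ∈ C ∧ x ∉ B := by
      by_contra h
      push_neg at h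
      exact hne (Set.Subset.antisymm hBC h)
    obtain ⟨x, hxC, hxB⟩ := this
    obtain ⟨w, hwB, hadj⟩ := hdom x trivial hxB
    exact hC hxC (hBC hwB) hadj
  · rintro ⟨hi, hmax⟩
    refine ⟨Set.subset_univ _, fun a ha b hb => hi ha hb, fun v _ hvB => ?_⟩
    by_contra hno
    push_neg at hno
    have hind : IsIndepSet G (insert v B) := by
      intro a ha b hb hadj
      rcases ha with rfl | ha <;> rcases hb with rfl | hb
      · exact G.loopless.irrefl _ hadj
      · exact hno b hb hadj
      · exact hno a ha hadj.symm
      · exact hi ha hb hadj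
    have := hmax _ hind (Set.subset_insert _ _)
    exact hvB (this ▸ Set.mem_insert v B)

end Comb

/-- Corollary `deguc`, unmixed case: if `G` is an unmixed finite simple
graph, then `deg (J(G)^{(k)}) = k * deg (J(G))` for every `k ≥ 1`; in particular,
`deg (J(G)^{(k)})` is a linear function of `k`. -/
theorem statement1 {V : Type*} [Fintype V] (K : Type*) [Field K] (G : SimpleGraph V)
    (hG : Unmixed G) (k : ℕ) (hk : 1 ≤ k) :
    genDeg (symbPow K G k) = k * genDeg (coverIdeal K G) := by
  classical
  obtain ⟨M₀, hM₀, -⟩ := exists_maxIndepOn G Set.univ ∅ (Set.empty_subset _)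
    (fun a ha => absurd ha (Set.notMem_empty a))
  set C₀ : Set V := Set.univ \ M₀ with hC₀
  set c : ℕ := C₀.ncard with hc0
  have h4univ : ∀ B, MaxIndepOn G Set.univ B → B.ncard = M₀.ncard := fun B hB =>
    hG B M₀ ((maxIndepOn_univ_iff G B).mp hB) ((maxIndepOn_univ_iff G M₀).mp hM₀)
  have hc : (Set.univ : Set V).ncard - M₀.ncard = c := by
    rw [hc0, hC₀, Set.ncard_diff (Set.subset_univ _)]
  have key : ∀ k' : ℕ, genDeg (symbPow K G k') = k' * c := by
    intro k'
    have upper : ∀ d ∈ {d : ℕ | ∃ m : V →₀ ℕ, IsMinGen (symbPow K G k') m ∧ mdeg m = d},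
        d ≤ k' * c := by
      rintro d ⟨m, hm, rfl⟩
      rw [isMinGen_symbPow_iff_s1] at hm
      have hmain := mainComb G ((Set.univ : Set V).ncard + k') Set.univ k' (fun i => m i) M₀.ncard
        le_rfl (fun i hi => absurd trivial hi) (fun a _ b _ hab => hm.1 a b hab)
        (fun i _ hi => by
          obtain ⟨j, hj, hle⟩ := hm.2 i hi
          exact ⟨j, trivial, hj, hle⟩) h4univ
      have hmd : mdeg m = ∑ i : V, m i := by
        rw [mdeg]
        exact Finsupp.sum_fintype _ _ (fun i => rfl)
      rw [hmd]
      rw [hc] at hmain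
      exact hmain
    set f : V → ℕ := C₀.indicator (fun _ => k') with hf
    set m₀ : V →₀ ℕ := Finsupp.equivFunOnFinite.symm f with hm₀
    have hm₀app : ∀ i, m₀ i = f i := fun i => rfl
    have hmin : IsMinGen (symbPow K G k') m₀ := by
      rw [isMinGen_symbPow_iff_s1]
      constructor
      · intro a b hab
        have hor : a ∉ M₀ ∨ b ∉ M₀ := by
          by_contra h
          push_neg at h
          exact hM₀.2.1 a h.1 b h.2 hab
        rcases hor with h | h
        · have haC : a ∈ C₀ := ⟨trivial, h⟩
          have : m₀ a = k' := by rw [hm₀app, hf, Set.indicator_of_mem haC]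
          omega
        · have hbC : b ∈ C₀ := ⟨trivial, h⟩
          have : m₀ b = k' := by rw [hm₀app, hf, Set.indicator_of_mem hbC]
          omega
      · intro i hi
        have hiC : i ∈ C₀ := by
          by_contra h
          rw [hm₀app, hf, Set.indicator_of_notMem h] at hi
          exact hi rfl
        obtain ⟨w, hwM, hadj⟩ := hM₀.2.2 i trivial hiC.2
        refine ⟨w, hadj, ?_⟩
        have hwC : w ∉ C₀ := fun h => h.2 hwM
        rw [hm₀app, hm₀app, hf, Set.indicator_of_mem hiC, Set.indicator_of_notMem hwC]
        omega
    have hdeg : mdeg m₀ = k' * c := by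
      rw [mdeg, Finsupp.sum_fintype _ _ (fun i => rfl)]
      calc ∑ i : V, m₀ i = ∑ i : V, C₀.indicator (fun _ => k') i :=
            Finset.sum_congr rfl (fun i _ => hm₀app i)
        _ = ∑ i ∈ C₀.toFinite.toFinset, k' := sum_ite_set _ _
        _ = k' * c := by
            rw [Finset.sum_const, smul_eq_mul, hc0, ncard_eq_card_toFinset]
            exact mul_comm _ _
    rw [genDeg]
    exact IsGreatest.csSup_eq ⟨⟨m₀, hmin, hdeg⟩, upper⟩
  rw [key k, coverIdeal_eq_symbPow_one, key 1, one_mul]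
end

section
/- Let G be a finite simple graph without isolated vertices and assume that, for some integer k ≥ 2, the ideal J(G)^{(k)} is generated in a single degree. Then G is a very well-covered graph. -/
open MvPolynomial

/-- Auxiliary ideal: polynomials all of whose monomials have `a`-degree plus `b`-degree ≥ d. -/
def boundIdeal (K : Type*) [Field K] {V : Type*} (a b : V) (d : ℕ) :
    Ideal (MvPolynomial V K) where
  carrier := {f | ∀ e ∈ f.support, d ≤ e a + e b}
  zero_mem' := by intro e he; simp at he
  add_mem' := by
    classical
    intro f g hf hg e he
    rcases Finset.mem_union.mp (MvPolynomial.support_add he) with h | h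
    · exact hf e h
    · exact hg e h
  smul_mem' := by
    classical
    intro c f hf e he
    rw [smul_eq_mul] at he
    obtain ⟨e1, _, e2, he2, rfl⟩ := Finset.mem_add.mp (MvPolynomial.support_mul c f he)
    have := hf e2 he2
    simp only [Finsupp.add_apply]
    omega

lemma mem_boundIdeal {K : Type*} [Field K] {V : Type*} {a b : V} {d : ℕ}
    {f : MvPolynomial V K} : f ∈ boundIdeal K a b d ↔ ∀ e ∈ f.support, d ≤ e a + e b :=
  Iff.rfl

lemma span_le_boundIdeal (K : Type*) [Field K] {V : Type*} (a b : V) :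
    Ideal.span {X a, X b} ≤ boundIdeal K a b 1 := by
  rw [Ideal.span_le]
  rintro f (rfl | rfl) <;> intro e he <;>
    rw [MvPolynomial.support_X, Finset.mem_singleton] at he <;> subst he <;>
    simp [Finsupp.single_apply]

lemma pow_le_boundIdeal (K : Type*) [Field K] {V : Type*} (a b : V) (k : ℕ) :
    Ideal.span {X a, X b} ^ k ≤ boundIdeal K a b k := by
  classical
  induction k with
  | zero => intro f _ e _; exact Nat.zero_le _
  | succ n ih =>
    rw [pow_succ]
    apply Ideal.mul_le.mpr
    intro f hf g hg
    have hf' := ih hf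
    have hg' := span_le_boundIdeal K a b hg
    intro e he
    obtain ⟨e1, h1, e2, h2, rfl⟩ := Finset.mem_add.mp (MvPolynomial.support_mul f g he)
    have := hf' e1 h1
    have := hg' e2 h2
    simp only [Finsupp.add_apply]
    omega

lemma monomial_mem_pow_iff {K : Type*} [Field K] {V : Type*} {a b : V} (hab : a ≠ b)
    (m : V →₀ ℕ) (k : ℕ) :
    (monomial m (1 : K)) ∈ Ideal.span {X a, X b} ^ k ↔ k ≤ m a + m b := by
  classical
  constructor
  · intro h
    refine pow_le_boundIdeal K a b k h m ?_
    rw [MvPolynomial.support_monomial]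
    simp
  · intro h
    set i := min (m a) k with hi
    set j := k - i with hj
    have hia : i ≤ m a := min_le_left _ _
    have hjb : j ≤ m b := by omega
    have hij : i + j = k := by omega
    have hmono : (monomial m (1 : K)) =
        (monomial (m - (Finsupp.single a i + Finsupp.single b j)) (1 : K)) *
          ((X a) ^ i * (X b) ^ j) := by
      have heq : (m - (Finsupp.single a i + Finsupp.single b j))
          + (Finsupp.single a i + Finsupp.single b j) = m := by
        ext v
        simp only [Finsupp.add_apply, Finsupp.tsub_apply, Finsupp.single_apply]
        rcases eq_or_ne a v with rfl | hva
        · rw [if_pos rfl, if_neg (fun h => hab h.symm)]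
          omega
        · rw [if_neg hva]
          rcases eq_or_ne b v with rfl | hvb
          · rw [if_pos rfl]
            omega
          · rw [if_neg hvb]
            omega
      rw [X_pow_eq_monomial, X_pow_eq_monomial, monomial_mul, monomial_mul, one_mul, one_mul, heq]
    have hXa : X a ∈ Ideal.span ({X a, X b} : Set (MvPolynomial V K)) :=
      Ideal.subset_span (by simp)
    have hXb : X b ∈ Ideal.span ({X a, X b} : Set (MvPolynomial V K)) :=
      Ideal.subset_span (by simp)
    have hmem : (X a) ^ i * (X b) ^ j ∈ Ideal.span ({X a, X b} : Set (MvPolynomial V K)) ^ k := by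
      have := Ideal.mul_mem_mul (Ideal.pow_mem_pow hXa i) (Ideal.pow_mem_pow hXb j)
      rwa [← pow_add, hij] at this
    rw [hmono]
    exact Ideal.mul_mem_left _ _ hmem

lemma monomial_mem_symbPow_iff {K : Type*} [Field K] {V : Type*} (G : SimpleGraph V)
    (k : ℕ) (m : V →₀ ℕ) :
    (monomial m (1 : K)) ∈ symbPow K G k ↔ ∀ a b : V, G.Adj a b → k ≤ m a + m b := by
  unfold symbPow
  rw [Submodule.mem_iInf]
  constructor
  · intro h a b hab
    exact (monomial_mem_pow_iff hab.ne m k).mp ((Submodule.mem_iInf _).mp (h (a, b)) hab)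
  · intro h p
    rw [Submodule.mem_iInf]
    intro hp
    exact (monomial_mem_pow_iff hp.ne m k).mpr (h p.1 p.2 hp)

lemma mdeg_ite {V : Type*} [Fintype V] (A : Set V) [DecidablePred (· ∈ A)] (x y : ℕ) :
    mdeg (Finsupp.equivFunOnFinite.symm (fun v => if v ∈ A then x else y)) =
      A.ncard * x + (Fintype.card V - A.ncard) * y := by
  classical
  rw [mdeg, Finsupp.sum_fintype _ _ (fun _ => rfl)]
  have hcoe : ∀ v : V, (Finsupp.equivFunOnFinite.symm (fun v => if v ∈ A then x else y)) v
      = if v ∈ A then x else y := fun v => rfl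
  simp only [hcoe]
  rw [← Finset.sum_add_sum_compl A.toFinset]
  have e1 : ∑ v ∈ A.toFinset, (if v ∈ A then x else y) = A.toFinset.card * x := by
    rw [Finset.sum_congr rfl (fun v hv => if_pos (Set.mem_toFinset.mp hv)),
      Finset.sum_const, smul_eq_mul]
  have e2 : ∑ v ∈ A.toFinsetᶜ, (if v ∈ A then x else y)
      = (Fintype.card V - A.toFinset.card) * y := by
    rw [Finset.sum_congr rfl
        (fun v hv => if_neg (fun hv' => Finset.mem_compl.mp hv (Set.mem_toFinset.mpr hv'))),
      Finset.sum_const, smul_eq_mul, Finset.card_compl]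
  rw [e1, e2, Set.ncard_eq_toFinset_card' A]

/-- Lemma `singdeg`: if `G` is a finite simple graph without isolated
vertices and `J(G)^{(k)}` is generated in a single degree for some `k ≥ 2`, then `G` is a
very well-covered graph. -/
theorem statement3 {V : Type*} [Fintype V] (K : Type*) [Field K] (G : SimpleGraph V)
    (hiso : HasNoIsolatedVertex G) (k : ℕ) (hk : 2 ≤ k)
    (hsingle : ∀ m m' : V →₀ ℕ, IsMinGen (symbPow K G k) m → IsMinGen (symbPow K G k) m' →
      mdeg m = mdeg m') :
    VeryWellCovered G := by
  classical
  have key : ∀ A : Set V, IsMaxIndepSet G A → 2 * A.ncard = Fintype.card V := by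
    intro A hA
    have hadjA : ∀ i : V, i ∉ A → ∃ j ∈ A, G.Adj i j := by
      intro i hi
      by_contra h
      push_neg at h
      have hind : IsIndepSet G (insert i A) := by
        intro a ha b hb hab
        rcases ha with rfl | ha
        · rcases hb with rfl | hb
          · exact G.loopless.irrefl _ hab
          · exact h b hb hab
        · rcases hb with rfl | hb
          · exact h a ha hab.symm
          · exact hA.1 ha hb hab
      exact hi (by rw [hA.2 _ hind (Set.subset_insert i A)]; exact Set.mem_insert i A)
    set f1 : V → ℕ := fun v => if v ∈ A then 0 else k with hf1
    set f2 : V → ℕ := fun v => if v ∈ A then k / 2 else (k + 1) / 2 with hf2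
    set m1 := Finsupp.equivFunOnFinite.symm f1 with hm1def
    set m2 := Finsupp.equivFunOnFinite.symm f2 with hm2def
    have hm1 : ∀ v, m1 v = f1 v := fun v => rfl
    have hm2 : ∀ v, m2 v = f2 v := fun v => rfl
    -- m1 is a minimal generator
    have hgen1 : IsMinGen (symbPow K G k) m1 := by
      constructor
      · rw [monomial_mem_symbPow_iff]
        intro a b hab
        rw [hm1, hm1, hf1]
        by_cases ha : a ∈ A
        · have hb : b ∉ A := fun hb => hA.1 ha hb hab
          simp only [ha, hb, if_true, if_false]
          omega
        · simp only [ha, if_false]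
          omega
      · intro i hmi
        have hiA : i ∉ A := by
          intro hiA
          exact hmi (by rw [hm1, hf1]; simp [hiA])
        obtain ⟨j, hjA, hij⟩ := hadjA i hiA
        have hji : j ≠ i := fun h => hiA (h ▸ hjA)
        rw [monomial_mem_symbPow_iff]
        push_neg
        refine ⟨i, j, hij, ?_⟩
        rw [Finsupp.tsub_apply, Finsupp.tsub_apply, Finsupp.single_eq_same,
          Finsupp.single_eq_of_ne' (fun h => hji h.symm), hm1, hm1, hf1]
        simp only [hiA, hjA, if_true, if_false]
        omega
    -- m2 is a minimal generator
    have hgen2 : IsMinGen (symbPow K G k) m2 := by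
      constructor
      · rw [monomial_mem_symbPow_iff]
        intro a b hab
        rw [hm2, hm2, hf2]
        by_cases ha : a ∈ A
        · have hb : b ∉ A := fun hb => hA.1 ha hb hab
          simp only [ha, hb, if_true, if_false]
          omega
        · by_cases hb : b ∈ A <;> simp only [ha, hb, if_true, if_false] <;> omega
      · intro i _
        rw [monomial_mem_symbPow_iff]
        push_neg
        by_cases hiA : i ∈ A
        · obtain ⟨j, hij⟩ := hiso i
          have hjA : j ∉ A := fun hjA => hA.1 hiA hjA hij
          have hji : j ≠ i := fun h => hjA (h ▸ hiA)
          refine ⟨i, j, hij, ?_⟩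
          rw [Finsupp.tsub_apply, Finsupp.tsub_apply, Finsupp.single_eq_same,
            Finsupp.single_eq_of_ne' (fun h => hji h.symm), hm2, hm2, hf2]
          simp only [hiA, hjA, if_true, if_false]
          omega
        · obtain ⟨j, hjA, hij⟩ := hadjA i hiA
          have hji : j ≠ i := fun h => hiA (h ▸ hjA)
          refine ⟨i, j, hij, ?_⟩
          rw [Finsupp.tsub_apply, Finsupp.tsub_apply, Finsupp.single_eq_same,
            Finsupp.single_eq_of_ne' (fun h => hji h.symm), hm2, hm2, hf2]
          simp only [hiA, hjA, if_true, if_false]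
          omega
    have hdeg := hsingle m1 m2 hgen1 hgen2
    rw [hm1def, hm2def, hf1, hf2, mdeg_ite, mdeg_ite] at hdeg
    set a := A.ncard with ha
    set n := Fintype.card V with hn
    have han : a ≤ n := by
      rw [ha, hn, ← Nat.card_eq_fintype_card, ← Set.ncard_add_ncard_compl A]
      omega
    -- from hdeg : a * 0 + (n - a) * k = a * (k / 2) + (n - a) * ((k + 1) / 2)
    have hsplit : (n - a) * k = (n - a) * ((k + 1) / 2) + (n - a) * (k / 2) := by
      rw [← Nat.mul_add]
      congr 1
      omega
    rw [hsplit] at hdeg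
    have hcancel : (n - a) * (k / 2) = a * (k / 2) := by omega
    have hq : 0 < k / 2 := by omega
    have : n - a = a := Nat.eq_of_mul_eq_mul_right hq hcancel
    omega
  obtain ⟨A0, hA0⟩ : ∃ A : Set V, IsMaxIndepSet G A := by
    obtain ⟨A, hAs, hmax⟩ := Set.Finite.exists_maximalFor Set.ncard
      {B : Set V | IsIndepSet G B} (Set.toFinite _)
      ⟨∅, fun a ha => (Set.notMem_empty a ha).elim⟩
    refine ⟨A, hAs, fun B hB hAB => ?_⟩
    have hle : A.ncard ≤ B.ncard := Set.ncard_le_ncard hAB (Set.toFinite B)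
    exact Set.eq_of_subset_of_ncard_le hAB ((hmax hB hle)) (Set.toFinite B)
  exact ⟨hiso, ⟨A0.ncard, by rw [← key A0 hA0]; ring⟩, key⟩
end

section
/- Let G be a finite simple graph with vertex set V(G) = {x_1, …, x_n}, let x be a vertex of G, let u = ∏_{x_i ∈ N_G(x)} x_i, and let J' be the ideal of S generated by the cover ideal of the induced subgraph G \ N_G[x]. Then for every integer k ≥ 1, J(G)^{(k)} + (x) = u^k · J'^{(k)} + (x), where J'^{(k)} = ⋂_{{x_i,x_j} ∈ E(G \ N_G[x])} (x_i, x_j)^k (an empty intersection is the unit ideal). -/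
open MvPolynomial

section Helpers
variable {V : Type*} [DecidableEq V] {K : Type*} [Field K]

lemma supp_one (a b : V) (f : MvPolynomial V K)
    (hf : f ∈ Ideal.span {X a, X b}) : ∀ d ∈ f.support, 1 ≤ d a + d b := by
  rw [Ideal.mem_span_pair] at hf
  obtain ⟨p, q, rfl⟩ := hf
  intro d hd
  rcases Finset.mem_union.1 (MvPolynomial.support_add hd) with h | h
  · obtain ⟨d1, hd1, d2, hd2, rfl⟩ := Finset.mem_add.1 (MvPolynomial.support_mul _ _ h)
    rw [MvPolynomial.support_X, Finset.mem_singleton] at hd2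
    subst hd2
    simp only [Finsupp.add_apply, Finsupp.single_apply]
    split_ifs <;> omega
  · obtain ⟨d1, hd1, d2, hd2, rfl⟩ := Finset.mem_add.1 (MvPolynomial.support_mul _ _ h)
    rw [MvPolynomial.support_X, Finset.mem_singleton] at hd2
    subst hd2
    simp only [Finsupp.add_apply, Finsupp.single_apply]
    split_ifs <;> omega

lemma mem_pow_iff {a b : V} (hab : a ≠ b) (k : ℕ) (f : MvPolynomial V K) :
    f ∈ Ideal.span {X a, X b} ^ k ↔ ∀ d ∈ f.support, k ≤ d a + d b := by
  constructor
  · induction k generalizing f with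
    | zero => intro _ d _; exact Nat.zero_le _
    | succ n ih =>
      intro hf
      rw [pow_succ] at hf
      refine Submodule.mul_induction_on hf (fun m hm g hg d hd => ?_)
        (fun p q hp hq d hd => ?_)
      · obtain ⟨d1, hd1, d2, hd2, rfl⟩ := Finset.mem_add.1 (MvPolynomial.support_mul _ _ hd)
        have h1 := ih m hm d1 hd1
        have h2 := supp_one a b g hg d2 hd2
        simp only [Finsupp.add_apply]
        omega
      · rcases Finset.mem_union.1 (MvPolynomial.support_add hd) with h | h
        · exact hp d h
        · exact hq d h
  · intro hf
    rw [← MvPolynomial.support_sum_monomial_coeff f]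
    refine Ideal.sum_mem _ (fun d hd => ?_)
    have hk := hf d hd
    have hda : d = (d - Finsupp.single a (d a) - Finsupp.single b (d b))
        + (Finsupp.single a (d a) + Finsupp.single b (d b)) := by
      ext i
      simp only [Finsupp.add_apply, Finsupp.tsub_apply, Finsupp.single_apply]
      by_cases hia : i = a
      · subst hia; simp [Ne.symm hab]
      · by_cases hib : i = b
        · subst hib; simp [hab, hia]
        · simp [Ne.symm hia, Ne.symm hib, hia, hib]
    have hmul : (monomial d (coeff d f) : MvPolynomial V K)
        = monomial (d - Finsupp.single a (d a) - Finsupp.single b (d b)) (coeff d f)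
          * monomial (Finsupp.single a (d a) + Finsupp.single b (d b)) 1 := by
      rw [monomial_mul, mul_one, ← hda]
    rw [hmul]
    refine Ideal.mul_mem_left _ _ ?_
    have h1 : (monomial (Finsupp.single a (d a) + Finsupp.single b (d b)) (1 : K))
        = X a ^ (d a) * X b ^ (d b) := by
      rw [X_pow_eq_monomial, X_pow_eq_monomial, monomial_mul, mul_one]
    rw [h1]
    refine Ideal.pow_le_pow_right hk ?_
    rw [pow_add]
    exact Ideal.mul_mem_mul
      (Ideal.pow_mem_pow (Ideal.subset_span (by simp)) _)
      (Ideal.pow_mem_pow (Ideal.subset_span (by simp)) _)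

end Helpers

section MainHelpers
variable {V : Type*} [DecidableEq V] {K : Type*} [Field K]

lemma mem_symbPow_iff (G : SimpleGraph V) (k : ℕ) (f : MvPolynomial V K) :
    f ∈ symbPow K G k ↔ ∀ a b : V, G.Adj a b → ∀ d ∈ f.support, k ≤ d a + d b := by
  simp only [symbPow, Ideal.mem_iInf]
  constructor
  · intro h a b hab
    exact (mem_pow_iff hab.ne k f).1 (h (a, b) hab)
  · intro h p hp
    exact (mem_pow_iff hp.ne k f).2 (h p.1 p.2 hp)

lemma prod_X_eq (s : Finset V) :
    (∏ i ∈ s, X i : MvPolynomial V K) = monomial (∑ i ∈ s, Finsupp.single i 1) 1 := by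
  induction s using Finset.induction with
  | empty => simp
  | insert _ _ h ih =>
    rw [Finset.prod_insert h, Finset.sum_insert h, ih, ← pow_one (X _), X_pow_eq_monomial,
      monomial_mul, one_mul]

end MainHelpers


/-- Lemma `del`: for a vertex `x` of `G`, with `u = ∏_{x_i ∈ N_G(x)} x_i`
and `J'` the (extension to `S` of the) cover ideal of `G \ N_G[x]`, one has
`J(G)^{(k)} + (x) = u^k J'^{(k)} + (x)` for every `k ≥ 1`. -/
theorem statement4 {V : Type*} [Fintype V] [DecidableEq V] (K : Type*) [Field K]
    (G : SimpleGraph V) [DecidableRel G.Adj] (x : V) (k : ℕ) (hk : 1 ≤ k) :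
    symbPow K G k + Ideal.span {(X x : MvPolynomial V K)} =
      Ideal.span {(∏ i ∈ G.neighborFinset x, X i : MvPolynomial V K) ^ k} *
          symbPow K (deleteVerts G (insert x (G.neighborSet x))) k +
        Ideal.span {(X x : MvPolynomial V K)} := by
  classical
  set N := G.neighborFinset x with hN
  set w : V →₀ ℕ := k • ∑ i ∈ N, Finsupp.single i 1 with hwdef
  have hu : (∏ i ∈ N, X i : MvPolynomial V K) ^ k = monomial w (1 : K) := by
    rw [prod_X_eq, monomial_pow, one_pow]
  have hw : ∀ i : V, w i = if i ∈ N then k else 0 := by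
    intro i
    rw [hwdef]
    simp only [Finsupp.smul_apply, Finsupp.finset_sum_apply, Finsupp.single_apply, smul_eq_mul]
    rw [Finset.sum_ite_eq' N i (fun _ => 1)]
    split_ifs <;> simp
  set G' := deleteVerts G (insert x (G.neighborSet x)) with hG'
  have hG'adj : ∀ a b : V, G'.Adj a b ↔ G.Adj a b ∧ (a ≠ x ∧ a ∉ N) ∧ (b ≠ x ∧ b ∉ N) := by
    intro a b
    rw [hG']
    show (G.Adj a b ∧ _ ∧ _) ↔ _
    simp only [Set.mem_insert_iff, SimpleGraph.mem_neighborSet, not_or, hN,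
      SimpleGraph.mem_neighborFinset]
  -- Inclusion A
  have hA : Ideal.span {(∏ i ∈ N, X i : MvPolynomial V K) ^ k} * symbPow K G' k
      ≤ symbPow K G k := by
    rw [Ideal.mul_le]
    intro r hr s hs
    rw [Ideal.mem_span_singleton] at hr
    obtain ⟨p, rfl⟩ := hr
    have key : (∏ i ∈ N, X i : MvPolynomial V K) ^ k * s ∈ symbPow K G k := by
      rw [hu, mem_symbPow_iff]
      intro a b hab d hd
      obtain ⟨d1, hd1, d2, hd2, rfl⟩ := Finset.mem_add.1 (MvPolynomial.support_mul _ _ hd)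
      rw [support_monomial, if_neg one_ne_zero, Finset.mem_singleton] at hd1
      subst hd1
      simp only [Finsupp.add_apply, hw a, hw b]
      by_cases haN : a ∈ N
      · simp only [if_pos haN]; omega
      by_cases hbN : b ∈ N
      · simp only [if_pos hbN]; omega
      have hax : a ≠ x := by
        rintro rfl
        exact hbN (by rw [hN, SimpleGraph.mem_neighborFinset]; exact hab)
      have hbx : b ≠ x := by
        rintro rfl
        exact haN (by rw [hN, SimpleGraph.mem_neighborFinset]; exact hab.symm)
      have hadj' : G'.Adj a b := (hG'adj a b).2 ⟨hab, ⟨hax, haN⟩, ⟨hbx, hbN⟩⟩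
      have := (mem_symbPow_iff _ _ _).1 hs a b hadj' d2 hd2
      simp only [if_neg haN, if_neg hbN]
      omega
    rw [mul_right_comm]
    exact Ideal.mul_mem_right p _ key
  -- Inclusion B
  have hB : symbPow K G k ≤
      Ideal.span {(∏ i ∈ N, X i : MvPolynomial V K) ^ k} * symbPow K G' k
        ⊔ Ideal.span {(X x : MvPolynomial V K)} := by
    intro f hf
    have hsplit : f = (∑ d ∈ f.support.filter (fun d => d x = 0), monomial d (coeff d f))
        + ∑ d ∈ f.support.filter (fun d => ¬ d x = 0), monomial d (coeff d f) := by
      rw [Finset.sum_filter_add_sum_filter_not, MvPolynomial.support_sum_monomial_coeff]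
    have hfc := (mem_symbPow_iff G k f).1 hf
    have h0 : (∑ d ∈ f.support.filter (fun d => d x = 0), monomial d (coeff d f))
        ∈ Ideal.span {(∏ i ∈ N, X i : MvPolynomial V K) ^ k} * symbPow K G' k := by
      refine Ideal.sum_mem _ (fun d hd => ?_)
      rw [Finset.mem_filter] at hd
      obtain ⟨hdf, hdx⟩ := hd
      have hdN : ∀ i ∈ N, k ≤ d i := by
        intro i hi
        have hadj : G.Adj x i := by rwa [hN, SimpleGraph.mem_neighborFinset] at hi
        have := hfc x i hadj d hdf
        omega
      have hdw : d = w + (d - w) := by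
        ext i
        simp only [Finsupp.add_apply, Finsupp.tsub_apply]
        have := hw i
        by_cases hi : i ∈ N
        · have := hdN i hi; rw [hw i, if_pos hi]; omega
        · rw [hw i, if_neg hi]; omega
      have hmul : (monomial d (coeff d f) : MvPolynomial V K)
          = monomial w 1 * monomial (d - w) (coeff d f) := by
        rw [monomial_mul, one_mul, ← hdw]
      rw [hmul, hu]
      refine Ideal.mul_mem_mul (Ideal.subset_span rfl) ?_
      rw [mem_symbPow_iff]
      intro a b hab e he
      have he' : e = d - w :=
        Finset.mem_singleton.1 (MvPolynomial.support_monomial_subset he)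
      subst he'
      obtain ⟨hab', ⟨hax, haN⟩, ⟨hbx, hbN⟩⟩ := (hG'adj a b).1 hab
      have := hfc a b hab' d hdf
      simp only [Finsupp.tsub_apply, hw a, hw b, if_neg haN, if_neg hbN]
      omega
    have h1 : (∑ d ∈ f.support.filter (fun d => ¬ d x = 0), monomial d (coeff d f))
        ∈ Ideal.span {(X x : MvPolynomial V K)} := by
      refine Ideal.sum_mem _ (fun d hd => ?_)
      rw [Finset.mem_filter] at hd
      obtain ⟨hdf, hdx⟩ := hd
      rw [Ideal.mem_span_singleton]
      refine ⟨monomial (d - Finsupp.single x 1) (coeff d f), ?_⟩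
      have hd1 : Finsupp.single x 1 + (d - Finsupp.single x 1) = d := by
        ext i
        simp only [Finsupp.add_apply, Finsupp.tsub_apply, Finsupp.single_apply]
        split_ifs with h
        · subst h; omega
        · omega
      rw [← pow_one (X x), X_pow_eq_monomial, monomial_mul, one_mul, hd1]
    rw [hsplit]
    exact Submodule.add_mem_sup h0 h1
  rw [Ideal.add_eq_sup, Ideal.add_eq_sup]
  exact le_antisymm (sup_le hB le_sup_right)
    (sup_le (hA.trans le_sup_left) le_sup_right)
end

section
/- Let G be a very well-covered graph with 2h vertices. Then the vertices of G can be labeled as V(G) = {x_1, …, x_h, y_1, …, y_h} such that: (i) {x_1, …, x_h} is a minimal vertex cover of G and {y_1, …, y_h} is a maximal independent set of G; (ii) {x_i, y_i} ∈ E(G) for each i = 1, …, h; (iii) if {z_i, x_j} ∈ E(G) and {y_j, x_k} ∈ E(G) for distinct indices i, j, k and z_i ∈ {x_i, y_i}, then {z_i, x_k} ∈ E(G); (iv) if {x_i, y_j} ∈ E(G), then {x_i, x_j} ∉ E(G). -/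
open MvPolynomial

namespace VWCAux

variable {V : Type*}

/-- `M` is a maximal independent set of `G` relative to the vertex subset `A`. -/
def RMax (G : SimpleGraph V) (A M : Set V) : Prop :=
  M ⊆ A ∧ IsIndepSet G M ∧ ∀ v ∈ A, v ∉ M → ∃ u ∈ M, G.Adj v u

lemma indep_insert {G : SimpleGraph V} {M : Set V} (hM : IsIndepSet G M) {v : V}
    (hv : ∀ u ∈ M, ¬ G.Adj v u) : IsIndepSet G (insert v M) := by
  intro a ha b hb hab
  rcases ha with rfl | ha <;> rcases hb with rfl | hb
  · exact G.loopless.irrefl _ hab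
  · exact hv b hb hab
  · exact hv a ha hab.symm
  · exact hM ha hb hab

lemma rmax_univ_iff (G : SimpleGraph V) (M : Set V) :
    RMax G Set.univ M ↔ IsMaxIndepSet G M := by
  constructor
  · rintro ⟨-, hind, hdom⟩
    refine ⟨hind, fun B hB hMB => ?_⟩
    by_contra hne
    obtain ⟨v, hvB, hvM⟩ : ∃ v, v ∈ B ∧ v ∉ M := by
      by_contra h
      push_neg at h
      exact hne (le_antisymm hMB h)
    obtain ⟨u, huM, hadj⟩ := hdom v trivial hvM
    exact hB hvB (hMB huM) hadj
  · rintro ⟨hind, hmax⟩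
    refine ⟨Set.subset_univ _, hind, fun v _ hvM => ?_⟩
    by_contra h
    push_neg at h
    have : M = insert v M := hmax _ (indep_insert hind (fun u hu hadj => h u hu hadj)) (Set.subset_insert _ _)
    exact hvM (this ▸ Set.mem_insert v M)

lemma exists_rmax [Fintype V] (G : SimpleGraph V) (A I : Set V) (hIA : I ⊆ A)
    (hI : IsIndepSet G I) : ∃ M, RMax G A M ∧ I ⊆ M := by
  classical
  let 𝒮 : Finset (Finset V) :=
    Finset.univ.filter (fun t => (t : Set V) ⊆ A ∧ IsIndepSet G (t : Set V) ∧ I ⊆ (t : Set V))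
  have hne : 𝒮.Nonempty := by
    refine ⟨I.toFinset, ?_⟩
    simp only [𝒮, Finset.mem_filter, Finset.mem_univ, true_and, Set.coe_toFinset]
    exact ⟨hIA, hI, subset_rfl⟩
  obtain ⟨t₀, ht₀, hmax⟩ := 𝒮.exists_max_image (fun t => t.card) hne
  simp only [𝒮, Finset.mem_filter, Finset.mem_univ, true_and] at ht₀
  obtain ⟨htA, htI, hIt⟩ := ht₀
  refine ⟨(t₀ : Set V), ⟨htA, htI, fun v hvA hvt => ?_⟩, hIt⟩
  by_contra h
  push_neg at h
  have hvt' : v ∉ t₀ := by simpa using hvt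
  have hmem : insert v t₀ ∈ 𝒮 := by
    simp only [𝒮, Finset.mem_filter, Finset.mem_univ, true_and, Finset.coe_insert]
    exact ⟨Set.insert_subset hvA htA,
      indep_insert htI (fun u hu hadj => h u hu hadj),
      hIt.trans (Set.subset_insert _ _)⟩
  have := hmax _ hmem
  rw [Finset.card_insert_of_notMem hvt'] at this
  omega

lemma rmax_empty (G : SimpleGraph V) : RMax G ∅ ∅ :=
  ⟨subset_rfl, fun a ha => absurd ha (Set.notMem_empty a), fun v hv => absurd hv (Set.notMem_empty v)⟩

lemma ncard_le_of_rmax_const [Fintype V] (G : SimpleGraph V) {A : Set V} {s : ℕ}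
    (hall : ∀ M, RMax G A M → M.ncard = s) {I : Set V} (hIA : I ⊆ A)
    (hI : IsIndepSet G I) : I.ncard ≤ s := by
  obtain ⟨M, hM, hIM⟩ := exists_rmax G A I hIA hI
  rw [← hall M hM]
  exact Set.ncard_le_ncard hIM (Set.toFinite M)



/-- Main structural lemma: if every maximal independent subset of `A` (relative to `A`) has
cardinality `s` and `A` has no isolated vertices (within `A`), then `|A| ≥ 2s`; and if
`|A| = 2s`, there is a perfect matching of `A` along edges, together with a relative maximal
independent set `Y` picking exactly one endpoint of each matching pair. -/
lemma grand [Fintype V] (G : SimpleGraph V) (N : ℕ) :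
    ∀ (A : Set V) (s : ℕ), A.ncard = N →
      (∀ v ∈ A, ∃ u ∈ A, G.Adj v u) →
      (∀ M, RMax G A M → M.ncard = s) →
      2 * s ≤ A.ncard ∧
        (A.ncard = 2 * s →
          ∃ (m : V → V) (Y : Set V), Set.MapsTo m A A ∧ (∀ v ∈ A, m (m v) = v) ∧
            (∀ v ∈ A, G.Adj v (m v)) ∧ RMax G A Y ∧ (∀ v ∈ A, (v ∈ Y ↔ m v ∉ Y))) := by
  classical
  induction N using Nat.strong_induction_on with
  | _ N IH =>
  intro A s hN hnoiso hall
  rcases Set.eq_empty_or_nonempty A with rfl | hAne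
  · have hs : s = 0 := by
      have := hall ∅ (rmax_empty G)
      simpa using this.symm
    subst hs
    refine ⟨by simp, fun _ => ⟨id, ∅, ?_, ?_, ?_, rmax_empty G, ?_⟩⟩ <;> simp [Set.MapsTo]
  -- pick a vertex of minimum (relative) degree
  obtain ⟨v₀, hv₀A, hv₀min⟩ := Set.exists_min_image A
    (fun v => (G.neighborSet v ∩ A).ncard) (Set.toFinite A) hAne
  set X : Set V := G.neighborSet v₀ ∩ A with hXdef
  set P : Set V := {z | z ∈ A ∧ G.neighborSet z ∩ A ⊆ X} with hPdef
  have hXA : X ⊆ A := Set.inter_subset_right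
  have hPA : P ⊆ A := fun z hz => hz.1
  have hXne : X.Nonempty := by
    obtain ⟨u, huA, hadj⟩ := hnoiso v₀ hv₀A
    exact ⟨u, hadj, huA⟩
  -- every element of P has relative neighborhood exactly X
  have hPnbhd : ∀ z ∈ P, G.neighborSet z ∩ A = X := by
    intro z hz
    refine Set.eq_of_subset_of_ncard_le hz.2 ?_ (Set.toFinite _)
    · exact hv₀min z hz.1
  have hv₀P : v₀ ∈ P := ⟨hv₀A, subset_rfl⟩
  have hPne : P.Nonempty := ⟨v₀, hv₀P⟩
  have hXPdisj : X ∩ P = ∅ := by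
    ext z
    simp only [Set.mem_inter_iff, Set.mem_empty_iff_false, iff_false, not_and]
    intro hzX hzP
    have hv₀z : G.Adj z v₀ := (hzX.1 : G.Adj v₀ z).symm
    have : v₀ ∈ X := (hPnbhd z hzP) ▸ (⟨hv₀z, hv₀A⟩ : v₀ ∈ G.neighborSet z ∩ A)
    exact G.loopless.irrefl v₀ this.1
  have hXPdisj' : Disjoint X P := Set.disjoint_iff_inter_eq_empty.mpr hXPdisj
  have hPindep : IsIndepSet G P := by
    intro z hz z' hz' hadj
    have : z' ∈ X := (hPnbhd z hz) ▸ (⟨hadj, hPA hz'⟩ : z' ∈ G.neighborSet z ∩ A)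
    exact (Set.eq_empty_iff_forall_notMem.mp hXPdisj z') ⟨this, hz'⟩
  have hPX : ∀ p ∈ P, ∀ x ∈ X, G.Adj p x := by
    intro p hp x hx
    have : x ∈ G.neighborSet p ∩ A := (hPnbhd p hp) ▸ hx
    exact this.1
  -- Claim 1 : |P| ≤ |X|
  have hPleX : P.ncard ≤ X.ncard := by
    obtain ⟨x₀, hx₀⟩ := hXne
    have hx₀i : IsIndepSet G {x₀} := by
      intro a ha b hb hab
      rw [Set.mem_singleton_iff] at ha hb
      subst ha; subst hb; exact G.loopless.irrefl _ hab
    obtain ⟨M, hM, hx₀M⟩ := exists_rmax G A {x₀} (by simpa using hXA hx₀) hx₀i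
    have hx₀M' : x₀ ∈ M := hx₀M rfl
    have hMP : M ∩ P = ∅ := by
      ext p
      simp only [Set.mem_inter_iff, Set.mem_empty_iff_false, iff_false, not_and]
      intro hpM hpP
      exact hM.2.1 hpM hx₀M' (hPX p hpP x₀ hx₀)
    -- the exchanged independent set
    have hstar : IsIndepSet G ((M \ X) ∪ P) := by
      intro a ha b hb hab
      rcases ha with ha | ha <;> rcases hb with hb | hb
      · exact hM.2.1 ha.1 hb.1 hab
      · have : a ∈ X := (hPnbhd b hb) ▸ (⟨hab.symm, hM.1 ha.1⟩ : a ∈ G.neighborSet b ∩ A)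
        exact ha.2 this
      · have : b ∈ X := (hPnbhd a ha) ▸ (⟨hab, hM.1 hb.1⟩ : b ∈ G.neighborSet a ∩ A)
        exact hb.2 this
      · exact hPindep ha hb hab
    have hstarA : (M \ X) ∪ P ⊆ A := Set.union_subset ((Set.diff_subset).trans hM.1) hPA
    have h1 : (M \ X).ncard + P.ncard ≤ s := by
      have hd : Disjoint (M \ X) P := by
        rw [Set.disjoint_left]
        intro a ha haP
        exact (Set.eq_empty_iff_forall_notMem.mp hMP a) ⟨ha.1, haP⟩
      have := ncard_le_of_rmax_const G hall hstarA hstar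
      rwa [Set.ncard_union_eq hd (Set.toFinite _) (Set.toFinite _)] at this
    have h2 : s ≤ (M \ X).ncard + X.ncard := by
      have hMs : M.ncard = s := hall M hM
      have := Set.ncard_inter_add_ncard_diff_eq_ncard M X (Set.toFinite M)
      have hle : (M ∩ X).ncard ≤ X.ncard := Set.ncard_le_ncard Set.inter_subset_right (Set.toFinite X)
      omega
    omega
  -- the reduced vertex set
  set A₂ : Set V := A \ (X ∪ P) with hA₂def
  have hXPA : X ∪ P ⊆ A := Set.union_subset hXA hPA
  have hcardA : A₂.ncard + (X.ncard + P.ncard) = A.ncard := by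
    have h1 := Set.ncard_diff_add_ncard_of_subset hXPA (Set.toFinite A)
    have h2 : (X ∪ P).ncard = X.ncard + P.ncard :=
      Set.ncard_union_eq hXPdisj' (Set.toFinite X) (Set.toFinite P)
    rw [← h2]; exact h1
  have hA₂A : A₂ ⊆ A := Set.diff_subset
  -- no isolated vertices in A₂
  have hnoiso₂ : ∀ v ∈ A₂, ∃ u ∈ A₂, G.Adj v u := by
    intro v hv
    by_contra h
    push_neg at h
    have hnb : G.neighborSet v ∩ A ⊆ X := by
      intro u hu
      by_cases huX : u ∈ X
      · exact huX
      · by_cases huP : u ∈ P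
        · have : v ∈ X := (hPnbhd u huP) ▸ (⟨hu.1.symm, hA₂A hv⟩ : v ∈ G.neighborSet u ∩ A)
          exact absurd this (fun hc => hv.2 (Or.inl hc))
        · have huA₂ : u ∈ A₂ := ⟨hu.2, fun hc => hc.elim huX huP⟩
          exact absurd hu.1 (h u huA₂)
    exact hv.2 (Or.inr ⟨hA₂A hv, hnb⟩)
  -- relative maximal independent sets of A₂ extend to A by adding P
  have hext : ∀ M₂, RMax G A₂ M₂ → RMax G A (P ∪ M₂) := by
    intro M₂ hM₂
    have hM₂A₂ := hM₂.1
    refine ⟨Set.union_subset hPA (hM₂A₂.trans hA₂A), ?_, ?_⟩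
    · intro a ha b hb hab
      rcases ha with ha | ha <;> rcases hb with hb | hb
      · exact hPindep ha hb hab
      · have : b ∈ X := (hPnbhd a ha) ▸ (⟨hab, hA₂A (hM₂A₂ hb)⟩ : b ∈ G.neighborSet a ∩ A)
        exact (hM₂A₂ hb).2 (Or.inl this)
      · have : a ∈ X := (hPnbhd b hb) ▸ (⟨hab.symm, hA₂A (hM₂A₂ ha)⟩ : a ∈ G.neighborSet b ∩ A)
        exact (hM₂A₂ ha).2 (Or.inl this)
      · exact hM₂.2.1 ha hb hab
    · intro v hvA hvM
      by_cases hvX : v ∈ X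
      · exact ⟨v₀, Or.inl hv₀P, ((hPX v₀ hv₀P v hvX).symm : G.Adj v v₀)⟩
      · by_cases hvP : v ∈ P
        · exact absurd (Or.inl hvP) hvM
        · obtain ⟨u, huM₂, hadj⟩ := hM₂.2.2 v ⟨hvA, fun hc => hc.elim hvX hvP⟩
            (fun hc => hvM (Or.inr hc))
          exact ⟨u, Or.inr huM₂, hadj⟩
  have hPdisjA₂ : ∀ {M₂ : Set V}, M₂ ⊆ A₂ → Disjoint P M₂ := by
    intro M₂ hM₂A₂
    rw [Set.disjoint_left]
    intro a haP haM₂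
    exact (hM₂A₂ haM₂).2 (Or.inr haP)
  obtain ⟨M₂₀, hM₂₀, -⟩ := exists_rmax G A₂ ∅ (Set.empty_subset _)
    (fun a ha => absurd ha (Set.notMem_empty a))
  set s₂ : ℕ := M₂₀.ncard with hs₂def
  have hs₂s : ∀ M₂, RMax G A₂ M₂ → M₂.ncard + P.ncard = s := by
    intro M₂ hM₂
    have := hall _ (hext M₂ hM₂)
    rwa [Set.ncard_union_eq (hPdisjA₂ hM₂.1) (Set.toFinite P) (Set.toFinite M₂), add_comm] at this
  have hss : s₂ + P.ncard = s := hs₂s M₂₀ hM₂₀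
  have hall₂ : ∀ M₂, RMax G A₂ M₂ → M₂.ncard = s₂ := by
    intro M₂ hM₂
    have := hs₂s M₂ hM₂
    omega
  -- apply the induction hypothesis
  have hlt : A₂.ncard < N := by
    rw [← hN]
    exact Set.ncard_lt_ncard ⟨hA₂A, fun hc => (hc hv₀A).2 (Or.inr hv₀P)⟩ (Set.toFinite A)
  have IH2 := IH A₂.ncard hlt A₂ s₂ rfl hnoiso₂ hall₂
  have hXpos : 1 ≤ X.ncard := by
    obtain ⟨x, hx⟩ := hXne
    have := Set.ncard_ne_zero_of_mem hx (Set.toFinite X)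
    omega
  constructor
  · omega
  -- equality case : build the matching
  intro heq
  have hPeqX : P.ncard = X.ncard := by omega
  have hA₂eq : A₂.ncard = 2 * s₂ := by omega
  obtain ⟨m₂, Y₂, hm₂maps, hm₂inv, hm₂adj, hY₂, hY₂pair⟩ := IH2.2 hA₂eq
  -- bijection between P and X
  haveI : Fintype ↥P := (Set.toFinite P).fintype
  haveI : Fintype ↥X := (Set.toFinite X).fintype
  have hcardPX : Fintype.card ↥P = Fintype.card ↥X := by
    rw [← Nat.card_eq_fintype_card, ← Nat.card_eq_fintype_card,
      Nat.card_coe_set_eq, Nat.card_coe_set_eq, hPeqX]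
  let e' : ↥P ≃ ↥X := Fintype.equivOfCardEq hcardPX
  classical
  set m : V → V := fun v =>
    if hv : v ∈ P then (e' ⟨v, hv⟩ : V)
    else if hv' : v ∈ X then (e'.symm ⟨v, hv'⟩ : V)
    else m₂ v with hmdef
  have hmPval : ∀ (v : V) (hv : v ∈ P), m v = (e' ⟨v, hv⟩ : V) := by
    intro v hv
    simp only [hmdef, dif_pos hv]
  have hmXval : ∀ (v : V) (hv : v ∈ X), m v = (e'.symm ⟨v, hv⟩ : V) := by
    intro v hv
    have hvP : v ∉ P := fun hc => (Set.eq_empty_iff_forall_notMem.mp hXPdisj v) ⟨hv, hc⟩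
    simp only [hmdef, dif_neg hvP, dif_pos hv]
  have hmA₂val : ∀ v ∈ A₂, m v = m₂ v := by
    intro v hv
    have hvP : v ∉ P := fun hc => hv.2 (Or.inr hc)
    have hvX : v ∉ X := fun hc => hv.2 (Or.inl hc)
    simp only [hmdef, dif_neg hvP, dif_neg hvX]
  have hmP : ∀ v ∈ P, m v ∈ X := by
    intro v hv; rw [hmPval v hv]; exact (e' ⟨v, hv⟩).2
  have hmX : ∀ v ∈ X, m v ∈ P := by
    intro v hv; rw [hmXval v hv]; exact (e'.symm ⟨v, hv⟩).2
  have hmA₂ : ∀ v ∈ A₂, m v ∈ A₂ := by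
    intro v hv; rw [hmA₂val v hv]; exact hm₂maps hv
  have htri : ∀ v ∈ A, v ∈ P ∨ v ∈ X ∨ v ∈ A₂ := by
    intro v hv
    by_cases h1 : v ∈ P
    · exact Or.inl h1
    by_cases h2 : v ∈ X
    · exact Or.inr (Or.inl h2)
    exact Or.inr (Or.inr ⟨hv, fun hc => hc.elim h2 h1⟩)
  refine ⟨m, P ∪ Y₂, ?_, ?_, ?_, hext Y₂ hY₂, ?_⟩
  · intro v hv
    rcases htri v hv with h | h | h
    · exact hXA (hmP v h)
    · exact hPA (hmX v h)
    · exact hA₂A (hmA₂ v h)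
  · intro v hv
    rcases htri v hv with h | h | h
    · have h2 : m v ∈ X := hmP v h
      rw [hmXval (m v) h2]
      have : (⟨m v, h2⟩ : ↥X) = e' ⟨v, h⟩ := Subtype.ext (hmPval v h)
      rw [this, Equiv.symm_apply_apply]
    · have h2 : m v ∈ P := hmX v h
      rw [hmPval (m v) h2]
      have : (⟨m v, h2⟩ : ↥P) = e'.symm ⟨v, h⟩ := Subtype.ext (hmXval v h)
      rw [this, Equiv.apply_symm_apply]
    · have h2 : m v ∈ A₂ := hmA₂ v h
      rw [hmA₂val (m v) h2, hmA₂val v h]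
      exact hm₂inv v h
  · intro v hv
    rcases htri v hv with h | h | h
    · exact hPX v h (m v) (hmP v h)
    · exact ((hPX (m v) (hmX v h) v h).symm : G.Adj v (m v))
    · rw [hmA₂val v h]; exact hm₂adj v h
  · intro v hv
    rcases htri v hv with h | h | h
    · simp only [Set.mem_union]
      have h2 : m v ∈ X := hmP v h
      have h3 : m v ∉ P := fun hc => (Set.eq_empty_iff_forall_notMem.mp hXPdisj (m v)) ⟨h2, hc⟩
      have h4 : m v ∉ Y₂ := fun hc => (hY₂.1 hc).2 (Or.inl h2)
      simp [h, h3, h4]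
    · have h1 : v ∉ P := fun hc => (Set.eq_empty_iff_forall_notMem.mp hXPdisj v) ⟨h, hc⟩
      have h2 : v ∉ Y₂ := fun hc => (hY₂.1 hc).2 (Or.inl h)
      have h3 : m v ∈ P := hmX v h
      simp [Set.mem_union, h1, h2, h3]
    · have h1 : v ∉ P := fun hc => h.2 (Or.inr hc)
      have h2 : m₂ v ∈ A₂ := by rw [← hmA₂val v h]; exact hmA₂ v h
      have h3 : m₂ v ∉ P := fun hc => h2.2 (Or.inr hc)
      rw [hmA₂val v h]
      simp only [Set.mem_union, h1, h3, false_or]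
      exact hY₂pair v h

end VWCAux

open VWCAux

open VWCAux in
theorem statement5' {V : Type*} [Fintype V] (G : SimpleGraph V) (h : ℕ)
    (hcard : Fintype.card V = 2 * h) (hG : VeryWellCovered G) :
    ∃ e : Fin h ⊕ Fin h ≃ V,
      IsMaxIndepSet G (Set.range fun i => e (Sum.inr i)) ∧
      (Set.range fun i => e (Sum.inl i)) = (Set.range fun i => e (Sum.inr i))ᶜ ∧
      (∀ i : Fin h, G.Adj (e (Sum.inl i)) (e (Sum.inr i))) ∧
      (∀ M : Set V, IsMaxIndepSet G M →
        ∀ i : Fin h, (e (Sum.inl i) ∈ M ∧ e (Sum.inr i) ∉ M) ∨ (e (Sum.inl i) ∉ M ∧ e (Sum.inr i) ∈ M)) := by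
  classical
  obtain ⟨hnoiso, -, hsize⟩ := hG
  -- every maximal independent set has ncard h
  have hall : ∀ M, RMax G Set.univ M → M.ncard = h := by
    intro M hM
    have := hsize M ((rmax_univ_iff G M).mp hM)
    omega
  have huniv : (Set.univ : Set V).ncard = 2 * h := by
    rw [Set.ncard_univ, Nat.card_eq_fintype_card, hcard]
  have hnoiso' : ∀ v ∈ (Set.univ : Set V), ∃ u ∈ (Set.univ : Set V), G.Adj v u := by
    intro v _
    obtain ⟨u, hu⟩ := hnoiso v
    exact ⟨u, trivial, hu⟩
  obtain ⟨m, Y, -, hminv, hmadj, hYr, hYpair⟩ :=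
    (grand G (Set.univ : Set V).ncard (Set.univ : Set V) h rfl hnoiso' hall).2 huniv
  have hminv' : ∀ v, m (m v) = v := fun v => hminv v trivial
  have hmadj' : ∀ v, G.Adj v (m v) := fun v => hmadj v trivial
  have hYpair' : ∀ v, v ∈ Y ↔ m v ∉ Y := fun v => hYpair v trivial
  have hYmax : IsMaxIndepSet G Y := (rmax_univ_iff G Y).mp hYr
  have hYcard : Y.ncard = h := hall Y hYr
  have hmY : ∀ v, v ∉ Y → m v ∈ Y := by
    intro v hv
    rw [hYpair' (m v), hminv' v]
    simpa using hv
  -- build the equivalence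
  haveI : Fintype ↥Y := (Set.toFinite Y).fintype
  have hYfcard : Fintype.card ↥Y = h := by
    rw [← Nat.card_eq_fintype_card, Nat.card_coe_set_eq, hYcard]
  let f : Fin h ≃ ↥Y := (Fintype.equivFinOfCardEq hYfcard).symm
  let F : Fin h ⊕ Fin h → V := Sum.elim (fun i => m ↑(f i)) (fun i => ↑(f i))
  have hmnotY : ∀ (y : ↥Y), m ↑y ∉ Y := fun y => (hYpair' ↑y).mp y.2
  have hFbij : Function.Bijective F := by
    constructor
    · intro a b hab
      rcases a with a | a <;> rcases b with b | b
      · simp only [F, Sum.elim_inl] at hab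
        have : (↑(f a) : V) = ↑(f b) := by
          rw [← hminv' ↑(f a), ← hminv' ↑(f b), hab]
        exact congrArg Sum.inl (f.injective (Subtype.ext this))
      · simp only [F, Sum.elim_inl, Sum.elim_inr] at hab
        exact absurd (hab ▸ (f b).2) (hmnotY (f a))
      · simp only [F, Sum.elim_inl, Sum.elim_inr] at hab
        exact absurd (hab ▸ (f a).2) (hmnotY (f b))
      · simp only [F, Sum.elim_inr] at hab
        exact congrArg Sum.inr (f.injective (Subtype.ext hab))
    · intro v
      by_cases hv : v ∈ Y
      · exact ⟨Sum.inr (f.symm ⟨v, hv⟩), by simp [F]⟩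
      · refine ⟨Sum.inl (f.symm ⟨m v, hmY v hv⟩), ?_⟩
        simp only [F, Sum.elim_inl]
        rw [show ((f (f.symm ⟨m v, hmY v hv⟩)) : V) = m v by rw [Equiv.apply_symm_apply]]
        exact hminv' v
  refine ⟨Equiv.ofBijective F hFbij, ?_, ?_, ?_, ?_⟩
  · have : (Set.range fun i => (Equiv.ofBijective F hFbij) (Sum.inr i)) = Y := by
      ext v
      constructor
      · rintro ⟨i, rfl⟩
        exact (f i).2
      · intro hv
        exact ⟨f.symm ⟨v, hv⟩, by simp [Equiv.ofBijective, F]⟩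
    rw [this]; exact hYmax
  · ext v
    simp only [Set.mem_range, Set.mem_compl_iff]
    constructor
    · rintro ⟨i, rfl⟩ ⟨j, hj⟩
      have hj' : (↑(f j) : V) = m ↑(f i) := by simpa [Equiv.ofBijective, F] using hj
      exact hmnotY (f i) (hj' ▸ (f j).2)
    · intro hv
      have hvY : v ∉ Y := by
        intro hc
        exact hv ⟨f.symm ⟨v, hc⟩, by simp [Equiv.ofBijective, F]⟩
      refine ⟨f.symm ⟨m v, hmY v hvY⟩, ?_⟩
      simp only [Equiv.ofBijective, Equiv.coe_fn_mk, F, Sum.elim_inl]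
      rw [show ((f (f.symm ⟨m v, hmY v hvY⟩)) : V) = m v by rw [Equiv.apply_symm_apply]]
      exact hminv' v
  · intro i
    exact (hmadj' ↑(f i)).symm
  · -- each maximal independent set contains exactly one vertex of each pair
    intro M hM i
    have hMr : RMax G Set.univ M := (rmax_univ_iff G M).mpr hM
    have hMcard : M.ncard = h := hall M hMr
    -- surjectivity counting argument
    have hMfin : M.Finite := Set.toFinite M
    have hYfin : Y.Finite := Set.toFinite Y
    have hcards : hYfin.toFinset.card ≤ hMfin.toFinset.card := by
      rw [← Set.ncard_eq_toFinset_card _ hYfin, ← Set.ncard_eq_toFinset_card _ hMfin,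
        hMcard, hYcard]
    set φ : V → V := fun u => if u ∈ Y then u else m u with hφdef
    have hmaps : ∀ a ∈ hMfin.toFinset, φ a ∈ hYfin.toFinset := by
      intro a ha
      rw [Set.Finite.mem_toFinset]
      by_cases haY : a ∈ Y
      · simp only [hφdef, if_pos haY]; exact haY
      · simp only [hφdef, if_neg haY]; exact hmY a haY
    have hinj : ∀ a₁ a₂ (ha₁ : a₁ ∈ hMfin.toFinset) (ha₂ : a₂ ∈ hMfin.toFinset),
        φ a₁ = φ a₂ → a₁ = a₂ := by
      intro a b ha hb hab
      rw [Set.Finite.mem_toFinset] at ha hb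
      by_cases haY : a ∈ Y <;> by_cases hbY : b ∈ Y
      · simpa [hφdef, if_pos haY, if_pos hbY] using hab
      · simp only [hφdef, if_pos haY, if_neg hbY] at hab
        exact absurd ((hab ▸ (hmadj' b)) : G.Adj b a) (fun hc => hM.1 hb ha hc)
      · simp only [hφdef, if_neg haY, if_pos hbY] at hab
        exact absurd ((hab.symm ▸ (hmadj' a)) : G.Adj a b) (fun hc => hM.1 ha hb hc)
      · simp only [hφdef, if_neg haY, if_neg hbY] at hab
        rw [← hminv' a, hab, hminv' b]
    have hsurj := Finset.surj_on_of_inj_on_of_card_le (fun a _ => φ a)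
      hmaps hinj hcards
    have hsur : ∀ y ∈ Y, y ∈ M ∨ m y ∈ M := by
      intro y hy
      obtain ⟨a, ha, hya⟩ := hsurj y (hYfin.mem_toFinset.mpr hy)
      rw [Set.Finite.mem_toFinset] at ha
      by_cases haY : a ∈ Y
      · left
        rwa [show y = a by simpa [hφdef, if_pos haY] using hya]
      · right
        have : y = m a := by simpa [hφdef, if_neg haY] using hya
        rw [this, hminv' a]
        exact ha
    -- exactly one of the pair is in M
    have hyiY : (↑(f i) : V) ∈ Y := (f i).2
    have hOR : (↑(f i) : V) ∈ M ∨ m ↑(f i) ∈ M := hsur _ hyiY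
    have hNAND : ¬((↑(f i) : V) ∈ M ∧ m ↑(f i) ∈ M) := by
      rintro ⟨h1, h2⟩
      exact hM.1 h1 h2 (hmadj' _)
    have hgoal : (m ↑(f i) ∈ M ∧ (↑(f i) : V) ∉ M) ∨ (m ↑(f i) ∉ M ∧ (↑(f i) : V) ∈ M) := by
      rcases hOR with h1 | h1
      · exact Or.inr ⟨fun hc => hNAND ⟨h1, hc⟩, h1⟩
      · exact Or.inl ⟨h1, fun hc => hNAND ⟨hc, h1⟩⟩
    simpa only [Equiv.ofBijective, Equiv.coe_fn_mk, F, Sum.elim_inl, Sum.elim_inr] using hgoal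

/-- Proposition `strwell`, structure of very well-covered graphs: a very
well-covered graph `G` with `2h` vertices admits a labeling
`V(G) = {x_1, …, x_h, y_1, …, y_h}` (here given by an equivalence `e : Fin h ⊕ Fin h ≃ V`,
with `x_i = e (inl i)` and `y_i = e (inr i)`) satisfying conditions (i)-(iv). -/
theorem statement5 {V : Type*} [Fintype V] (G : SimpleGraph V) (h : ℕ)
    (hcard : Fintype.card V = 2 * h) (hG : VeryWellCovered G) :
    ∃ e : Fin h ⊕ Fin h ≃ V,
      -- (i)
      IsMinVertexCover G (Set.range fun i => e (Sum.inl i)) ∧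
      IsMaxIndepSet G (Set.range fun i => e (Sum.inr i)) ∧
      -- (ii)
      (∀ i : Fin h, G.Adj (e (Sum.inl i)) (e (Sum.inr i))) ∧
      -- (iii)
      (∀ i j k : Fin h, i ≠ j → j ≠ k → i ≠ k →
        ∀ z ∈ ({e (Sum.inl i), e (Sum.inr i)} : Set V),
          G.Adj z (e (Sum.inl j)) → G.Adj (e (Sum.inr j)) (e (Sum.inl k)) →
            G.Adj z (e (Sum.inl k))) ∧
      -- (iv)
      (∀ i j : Fin h, G.Adj (e (Sum.inl i)) (e (Sum.inr j)) →
        ¬ G.Adj (e (Sum.inl i)) (e (Sum.inl j))) := by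
  classical
  obtain ⟨e, hYmax, hcompl, hadj, hpair⟩ := statement5' G h hcard hG
  -- a maximal independent set containing two given nonadjacent vertices
  have hext2 : ∀ a b : V, ¬ G.Adj a b → ∃ M, IsMaxIndepSet G M ∧ a ∈ M ∧ b ∈ M := by
    intro a b hnadj
    have hind : IsIndepSet G {a, b} := by
      intro u hu v hv huv
      rcases hu with rfl | hu <;> rcases hv with rfl | hv
      · exact G.loopless.irrefl _ huv
      · rw [Set.mem_singleton_iff] at hv; subst hv; exact hnadj huv
      · rw [Set.mem_singleton_iff] at hu; subst hu; exact hnadj huv.symm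
      · rw [Set.mem_singleton_iff] at hu hv; subst hu; subst hv; exact G.loopless.irrefl _ huv
    obtain ⟨M, hMr, hsub⟩ := exists_rmax G Set.univ {a, b} (Set.subset_univ _) hind
    exact ⟨M, (rmax_univ_iff G M).mp hMr, hsub (Set.mem_insert _ _),
      hsub (Set.mem_insert_of_mem _ rfl)⟩
  -- no vertex is adjacent to both endpoints of a matching pair
  have hLemC : ∀ (w : V) (j : Fin h),
      G.Adj w (e (Sum.inl j)) → G.Adj w (e (Sum.inr j)) → False := by
    intro w j h1 h2
    obtain ⟨M, hM, hwM, -⟩ := hext2 w w (G.loopless.irrefl w)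
    rcases hpair M hM j with ⟨hx, -⟩ | ⟨-, hy⟩
    · exact hM.1 hwM hx h1
    · exact hM.1 hwM hy h2
  refine ⟨e, ?_, hYmax, hadj, ?_, ?_⟩
  · -- minimal vertex cover
    rw [hcompl]
    set Y := Set.range fun i => e (Sum.inr i)
    have hYr := (rmax_univ_iff G Y).mpr hYmax
    constructor
    · intro a b hab
      by_contra hc
      push_neg at hc
      rw [Set.notMem_compl_iff, Set.notMem_compl_iff] at hc
      exact hYmax.1 hc.1 hc.2 hab
    · intro D hD hDcov
      obtain ⟨c, hcY, hcD⟩ := Set.exists_of_ssubset hD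
      obtain ⟨u, huY, hadjcu⟩ := hYr.2.2 c trivial hcY
      rcases hDcov hadjcu with hc1 | hc1
      · exact hcD hc1
      · exact (hD.1 hc1) huY
  · -- condition (iii)
    intro i j k _ _ _ z _ h1 h2
    by_contra hzk
    by_cases hzyk : G.Adj z (e (Sum.inr k))
    · have hnzyj : ¬ G.Adj z (e (Sum.inr j)) := fun hc => hLemC z j h1 hc
      obtain ⟨M, hM, hzM, hyjM⟩ := hext2 z (e (Sum.inr j)) hnzyj
      rcases hpair M hM k with ⟨hxk, -⟩ | ⟨-, hyk⟩
      · exact hM.1 hyjM hxk h2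
      · exact hM.1 hzM hyk hzyk
    · obtain ⟨M, hM, hzM, hxkM⟩ := hext2 z (e (Sum.inl k)) hzk
      rcases hpair M hM j with ⟨hxj, -⟩ | ⟨-, hyj⟩
      · exact hM.1 hzM hxj h1
      · exact hM.1 hyj hxkM h2
  · -- condition (iv)
    intro i j h1 h2
    exact hLemC (e (Sum.inl i)) j h2 h1
end

section
/- Let G be a finite simple graph without isolated vertices and let k ≥ 1 be an integer. If the monomial u is a minimal monomial generator of J(G), then u^k is a minimal monomial generator of J(G)^{(k)}. -/
open MvPolynomial

/-- The ideal of polynomials all of whose monomials have `a`,`b`-weight at least `k`. -/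
def wtIdeal (K : Type*) [Field K] {V : Type*} (a b : V) (k : ℕ) :
    Ideal (MvPolynomial V K) where
  carrier := {p | ∀ d ∈ p.support, k ≤ d a + d b}
  zero_mem' := by simp
  add_mem' := by
    classical
    intro p q hp hq d hd
    rcases Finset.mem_union.mp (MvPolynomial.support_add hd) with h | h
    · exact hp d h
    · exact hq d h
  smul_mem' := by
    classical
    intro c p hp d hd
    rw [smul_eq_mul] at hd
    obtain ⟨d1, _, d2, h2, rfl⟩ := Finset.mem_add.mp (MvPolynomial.support_mul c p hd)
    have := hp d2 h2
    simp only [Finsupp.add_apply]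
    omega

lemma wt_mul_le {K : Type*} [Field K] {V : Type*} (a b : V) (j l : ℕ) :
    wtIdeal K a b j * wtIdeal K a b l ≤ wtIdeal K a b (j + l) := by
  classical
  rw [Ideal.mul_le]
  intro p hp q hq d hd
  obtain ⟨d1, h1, d2, h2, rfl⟩ := Finset.mem_add.mp (MvPolynomial.support_mul p q hd)
  have := hp d1 h1
  have := hq d2 h2
  simp only [Finsupp.add_apply]
  omega

lemma span_pow_le_wt {K : Type*} [Field K] {V : Type*} (a b : V) (k : ℕ) :
    (Ideal.span {X a, X b} : Ideal (MvPolynomial V K)) ^ k ≤ wtIdeal K a b k := by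
  induction k with
  | zero => intro p _; simp [wtIdeal]
  | succ n ih =>
      have hbase : (Ideal.span {X a, X b} : Ideal (MvPolynomial V K)) ≤ wtIdeal K a b 1 := by
        rw [Ideal.span_le]
        rintro p (rfl | rfl) <;>
        · intro d hd
          rw [MvPolynomial.support_X] at hd
          simp only [Finset.mem_singleton] at hd
          subst hd
          simp [Finsupp.single_apply]
      calc (Ideal.span {X a, X b} : Ideal (MvPolynomial V K)) ^ (n+1)
          = Ideal.span {X a, X b} ^ n * Ideal.span {X a, X b} := by rw [pow_succ]
        _ ≤ wtIdeal K a b n * wtIdeal K a b 1 := Ideal.mul_mono ih hbase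
        _ ≤ wtIdeal K a b (n + 1) := wt_mul_le a b n 1

lemma mem_span_pow_iff {K : Type*} [Field K] {V : Type*} {a b : V} (hab : a ≠ b) (k : ℕ) (m : V →₀ ℕ) :
    (monomial m (1:K)) ∈ (Ideal.span {X a, X b} : Ideal (MvPolynomial V K)) ^ k ↔
      k ≤ m a + m b := by
  classical
  constructor
  · intro h
    have := span_pow_le_wt (K := K) a b k h m (by rw [MvPolynomial.support_monomial]; simp)
    exact this
  · intro h
    set j := min (m a) k with hj
    set t : V →₀ ℕ := Finsupp.single a j + Finsupp.single b (k - j) with ht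
    have htm : t ≤ m := by
      intro v
      simp only [ht, Finsupp.add_apply, Finsupp.single_apply]
      split_ifs with h1 h2 h3
      · exact absurd (h1.trans h2.symm) hab
      · subst h1; omega
      · subst h3; omega
      · omega
    have hdecomp : (monomial m (1:K)) = monomial (m - t) 1 * monomial t 1 := by
      rw [MvPolynomial.monomial_mul, one_mul, tsub_add_cancel_of_le htm]
    rw [hdecomp]
    apply Ideal.mul_mem_left
    have : (monomial t (1:K)) = X a ^ j * X b ^ (k - j) := by
      rw [MvPolynomial.X_pow_eq_monomial, MvPolynomial.X_pow_eq_monomial,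
        MvPolynomial.monomial_mul, one_mul, ht]
    rw [this]
    have hXa : (X a : MvPolynomial V K) ∈ Ideal.span {X a, X b} :=
      Ideal.subset_span (by simp)
    have hXb : (X b : MvPolynomial V K) ∈ Ideal.span {X a, X b} :=
      Ideal.subset_span (by simp)
    have : (Ideal.span {X a, X b} : Ideal (MvPolynomial V K)) ^ k
        = Ideal.span {X a, X b} ^ j * Ideal.span {X a, X b} ^ (k - j) := by
      rw [← pow_add]; congr 1; omega
    rw [this]
    exact Ideal.mul_mem_mul (Ideal.pow_mem_pow hXa j) (Ideal.pow_mem_pow hXb (k - j))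

lemma mem_coverIdeal_edge {K : Type*} [Field K] {V : Type*} {G : SimpleGraph V} {m : V →₀ ℕ}
    (h : (monomial m (1:K)) ∈ coverIdeal K G) {a b : V} (hadj : G.Adj a b) :
    1 ≤ m a + m b := by
  rw [coverIdeal, Ideal.mem_iInf] at h
  have h2 := h (a, b)
  rw [Ideal.mem_iInf] at h2
  have h3 := h2 hadj
  rw [← pow_one (Ideal.span {X a, X b})] at h3
  exact (mem_span_pow_iff hadj.ne 1 m).mp h3


/-- from the proof of Lemma `singdeg`: if `G` has no isolated vertices,
`k ≥ 1`, and the monomial with exponent vector `m` is a minimal monomial generator of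
`J(G)`, then its `k`-th power (exponent vector `k • m`) is a minimal monomial generator of
`J(G)^{(k)}`. -/
theorem statement6 {V : Type*} [Fintype V] (K : Type*) [Field K] (G : SimpleGraph V)
    (hiso : HasNoIsolatedVertex G) (k : ℕ) (hk : 1 ≤ k) (m : V →₀ ℕ)
    (hm : IsMinGen (coverIdeal K G) m) :
    IsMinGen (symbPow K G k) (k • m) := by
  classical
  constructor
  · rw [symbPow, Ideal.mem_iInf]
    intro p
    rw [Ideal.mem_iInf]
    intro hadj
    rw [mem_span_pow_iff hadj.ne k]
    have h1 : 1 ≤ m p.1 + m p.2 := mem_coverIdeal_edge hm.1 hadj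
    simp only [Finsupp.smul_apply, smul_eq_mul]
    calc k = k * 1 := (mul_one k).symm
      _ ≤ k * (m p.1 + m p.2) := Nat.mul_le_mul_left k h1
      _ = k * m p.1 + k * m p.2 := Nat.mul_add k _ _
  · intro i hi
    have hmi : m i ≠ 0 := by
      intro h0
      apply hi
      simp [Finsupp.smul_apply, h0]
    have hnot := hm.2 i hmi
    rw [coverIdeal, Ideal.mem_iInf] at hnot
    push_neg at hnot
    obtain ⟨p, hp⟩ := hnot
    rw [Ideal.mem_iInf] at hp
    push_neg at hp
    obtain ⟨hadj, hp⟩ := hp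
    rw [← pow_one (Ideal.span {X p.1, X p.2}), mem_span_pow_iff hadj.ne 1] at hp
    push_neg at hp
    simp only [Finsupp.tsub_apply] at hp
    have hA : m p.1 ≤ (Finsupp.single i 1) p.1 := by omega
    have hB : m p.2 ≤ (Finsupp.single i 1) p.2 := by omega
    have h1 : 1 ≤ m p.1 + m p.2 := mem_coverIdeal_edge hm.1 hadj
    have hs : (Finsupp.single i 1) p.1 + (Finsupp.single i 1) p.2 ≤ 1 := by
      simp only [Finsupp.single_apply]
      split_ifs with h1 h2
      · exact absurd (h1 ▸ h2) hadj.ne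
      all_goals omega
    have hcase : (m p.1 = 1 ∧ m p.2 = 0 ∧ (Finsupp.single i 1) p.1 = 1 ∧
          (Finsupp.single i 1) p.2 = 0) ∨
        (m p.2 = 1 ∧ m p.1 = 0 ∧ (Finsupp.single i 1) p.2 = 1 ∧
          (Finsupp.single i 1) p.1 = 0) := by omega
    intro hmem
    rw [symbPow, Ideal.mem_iInf] at hmem
    have h2 := hmem p
    rw [Ideal.mem_iInf] at h2
    have h3 := h2 hadj
    rw [mem_span_pow_iff hadj.ne k] at h3
    simp only [Finsupp.tsub_apply, Finsupp.smul_apply, smul_eq_mul] at h3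
    rcases hcase with ⟨e1, e2, e3, e4⟩ | ⟨e1, e2, e3, e4⟩ <;>
      rw [e1, e2, e3, e4] at h3 <;> simp at h3 <;> omega
end
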